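/- arXiv:2601.15990 — 5 statements merged into one kernel-verified Lean document; each statement's English description precedes it below -/
import Mathlib

section
/- Let d ≥ 7 be an integer and C ∈ ℝ. Define, for x ∈ ℝ^d with x ≠ 0, u_C(x) = 8(d−4)(d−2)·‖x‖^{−4}, v_C(x) = −4·log‖x‖ + C, and w_C(x) = 4(d−2)·‖x‖^{−2}. Then at every point x ≠ 0 the stationary chemotaxis system holds pointwise: Δu_C(x) − div(u_C ∇v_C)(x) = 0, Δv_C(x) + w_C(x) = 0, and Δw_C(x) + u_C(x) = 0, where Δ is the Laplacian on ℝ^d and div(u∇v) = ⟨∇u, ∇v⟩ + u·Δv. -/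
/-- The Laplacian of a real-valued function on `ℝ^d`, as the sum of second
partial derivatives along the standard coordinate directions. -/
noncomputable def lap (d : ℕ) (f : EuclideanSpace ℝ (Fin d) → ℝ)
    (x : EuclideanSpace ℝ (Fin d)) : ℝ :=
  ∑ i : Fin d,
    fderiv ℝ (fun y => fderiv ℝ f y (EuclideanSpace.single i 1)) x (EuclideanSpace.single i 1)

/-- `div (u ∇v) = ⟨∇u, ∇v⟩ + u · Δv`. -/
noncomputable def divGrad (d : ℕ) (u v : EuclideanSpace ℝ (Fin d) → ℝ)
    (x : EuclideanSpace ℝ (Fin d)) : ℝ :=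
  (inner ℝ (gradient u x) (gradient v x) : ℝ) + u x * lap d v x


open Real Filter

variable {d : ℕ}

local notation "E" => EuclideanSpace ℝ (Fin d)

lemma radial_hasFDerivAt (φ ψ : ℝ → ℝ) (hφ : ∀ t, 0 < t → HasDerivAt φ (ψ t) t)
    (x : E) (hx : x ≠ 0) :
    HasFDerivAt (fun y : E => φ (‖y‖ ^ 2)) (ψ (‖x‖ ^ 2) • ((2 : ℕ) • innerSL ℝ x)) x := by
  have hs : (0 : ℝ) < ‖x‖ ^ 2 := pow_pos (norm_pos_iff.mpr hx) 2
  exact (hφ _ hs).comp_hasFDerivAt x (hasStrictFDerivAt_norm_sq x).hasFDerivAt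

lemma radial_fderiv_apply (φ ψ : ℝ → ℝ) (hφ : ∀ t, 0 < t → HasDerivAt φ (ψ t) t)
    (x : E) (hx : x ≠ 0) (v : E) :
    fderiv ℝ (fun y : E => φ (‖y‖ ^ 2)) x v = ψ (‖x‖ ^ 2) * (2 * inner ℝ x v) := by
  rw [(radial_hasFDerivAt φ ψ hφ x hx).fderiv]
  simp [real_inner_comm]
  try ring

lemma radial_grad (φ ψ : ℝ → ℝ) (hφ : ∀ t, 0 < t → HasDerivAt φ (ψ t) t)
    (x : E) (hx : x ≠ 0) :
    gradient (fun y : E => φ (‖y‖ ^ 2)) x = (2 * ψ (‖x‖ ^ 2)) • x := by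
  have h : HasGradientAt (fun y : E => φ (‖y‖ ^ 2)) ((2 * ψ (‖x‖ ^ 2)) • x) x := by
    rw [hasGradientAt_iff_hasFDerivAt]
    refine (radial_hasFDerivAt φ ψ hφ x hx).congr_fderiv ?_
    ext v
    simp [real_inner_smul_left]
    try ring
  exact h.gradient

lemma radial_lap (φ ψ ψ' : ℝ → ℝ) (hφ : ∀ t, 0 < t → HasDerivAt φ (ψ t) t)
    (hψ : ∀ t, 0 < t → HasDerivAt ψ (ψ' t) t)
    (x : E) (hx : x ≠ 0) :
    lap d (fun y : E => φ (‖y‖ ^ 2)) x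
      = 4 * ψ' (‖x‖ ^ 2) * ‖x‖ ^ 2 + 2 * d * ψ (‖x‖ ^ 2) := by
  have hs : (0 : ℝ) < ‖x‖ ^ 2 := pow_pos (norm_pos_iff.mpr hx) 2
  have key : ∀ i : Fin d,
      fderiv ℝ (fun y => fderiv ℝ (fun y : E => φ (‖y‖ ^ 2)) y (EuclideanSpace.single i 1)) x
        (EuclideanSpace.single i 1) = 4 * ψ' (‖x‖ ^ 2) * (x i) ^ 2 + 2 * ψ (‖x‖ ^ 2) := by
    intro i
    have heq : (fun y => fderiv ℝ (fun y : E => φ (‖y‖ ^ 2)) y (EuclideanSpace.single i 1))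
        =ᶠ[nhds x] (fun y : E => ψ (‖y‖ ^ 2) * (2 * y i)) := by
      filter_upwards [isOpen_compl_singleton.mem_nhds (by simpa using hx : x ∈ ({0}ᶜ : Set E))]
        with y hy
      have hy' : y ≠ 0 := hy
      rw [radial_fderiv_apply φ ψ hφ y hy']
      congr 1
      simp [EuclideanSpace.inner_single_right]
    rw [heq.fderiv_eq]
    -- derivative of y ↦ ψ(‖y‖²) * (2 * y i)
    have h1 := radial_hasFDerivAt ψ ψ' hψ x hx
    have h2 : HasFDerivAt (fun y : E => 2 * y i)
        ((2 : ℝ) • (EuclideanSpace.proj i : E →L[ℝ] ℝ)) x :=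
      (EuclideanSpace.proj i : E →L[ℝ] ℝ).hasFDerivAt.const_mul 2
    have h3 := h1.mul h2
    rw [HasFDerivAt.fderiv (f := fun y : E => ψ (‖y‖ ^ 2) * (2 * y i)) h3]
    simp [EuclideanSpace.inner_single_right, real_inner_comm, PiLp.proj_apply]
    ring
  unfold lap
  rw [Finset.sum_congr rfl (fun i _ => key i)]
  rw [Finset.sum_add_distrib, Finset.sum_const]
  have hsum : ∑ i : Fin d, (x i) ^ 2 = ‖x‖ ^ 2 := by
    rw [EuclideanSpace.norm_sq_eq]
    simp [Real.norm_eq_abs, sq_abs]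
  rw [← Finset.mul_sum, hsum]
  simp
  ring


/-- For `d ≥ 7`, the triple
`u_C(x) = 8(d−4)(d−2)‖x‖⁻⁴`, `v_C(x) = −4 log‖x‖ + C`, `w_C(x) = 4(d−2)‖x‖⁻²`
satisfies the stationary chemotaxis system pointwise away from the origin. -/
theorem stmt0 (d : ℕ) (hd : 7 ≤ d) (C : ℝ) :
    ∀ x : EuclideanSpace ℝ (Fin d), x ≠ 0 →
      (lap d (fun y => 8 * ((d : ℝ) - 4) * ((d : ℝ) - 2) / ‖y‖ ^ 4) x
          - divGrad d (fun y => 8 * ((d : ℝ) - 4) * ((d : ℝ) - 2) / ‖y‖ ^ 4)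
              (fun y => -4 * Real.log ‖y‖ + C) x = 0) ∧
      (lap d (fun y => -4 * Real.log ‖y‖ + C) x + 4 * ((d : ℝ) - 2) / ‖x‖ ^ 2 = 0) ∧
      (lap d (fun y => 4 * ((d : ℝ) - 2) / ‖y‖ ^ 2) x
          + 8 * ((d : ℝ) - 4) * ((d : ℝ) - 2) / ‖x‖ ^ 4 = 0) := by
  intro x hx
  set A : ℝ := 8 * ((d : ℝ) - 4) * ((d : ℝ) - 2) with hA
  set B : ℝ := 4 * ((d : ℝ) - 2) with hB
  have hS : (0 : ℝ) < ‖x‖ ^ 2 := pow_pos (norm_pos_iff.mpr hx) 2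
  have hS' : (‖x‖ : ℝ) ^ 2 ≠ 0 := ne_of_gt hS
  set S : ℝ := ‖x‖ ^ 2 with hSdef
  -- the three radial profiles
  have hφu : ∀ t, 0 < t → HasDerivAt (fun t : ℝ => A / t ^ 2) (-2 * A / t ^ 3) t := by
    intro t ht
    have h := (hasDerivAt_const t A).div (hasDerivAt_pow 2 t) (pow_ne_zero 2 ht.ne')
    refine h.congr_deriv ?_
    field_simp
    ring
  have hψu : ∀ t, 0 < t → HasDerivAt (fun t : ℝ => -2 * A / t ^ 3) (6 * A / t ^ 4) t := by
    intro t ht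
    have h := (hasDerivAt_const t (-2 * A)).div (hasDerivAt_pow 3 t) (pow_ne_zero 3 ht.ne')
    refine h.congr_deriv ?_
    field_simp
    ring
  have hφv : ∀ t, 0 < t → HasDerivAt (fun t : ℝ => -2 * Real.log t + C) (-2 / t) t := by
    intro t ht
    have h := ((Real.hasDerivAt_log ht.ne').const_mul (-2 : ℝ)).add_const C
    refine h.congr_deriv ?_
    try field_simp
  have hψv : ∀ t, 0 < t → HasDerivAt (fun t : ℝ => -2 / t) (2 / t ^ 2) t := by
    intro t ht
    have h := (hasDerivAt_const t (-2 : ℝ)).div (hasDerivAt_id t) ht.ne'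
    refine h.congr_deriv ?_
    simp only [id]
    field_simp
    ring
  have hφw : ∀ t, 0 < t → HasDerivAt (fun t : ℝ => B / t) (-B / t ^ 2) t := by
    intro t ht
    have h := (hasDerivAt_const t B).div (hasDerivAt_id t) ht.ne'
    refine h.congr_deriv ?_
    simp only [id]
    field_simp
    ring
  have hψw : ∀ t, 0 < t → HasDerivAt (fun t : ℝ => -B / t ^ 2) (2 * B / t ^ 3) t := by
    intro t ht
    have h := (hasDerivAt_const t (-B)).div (hasDerivAt_pow 2 t) (pow_ne_zero 2 ht.ne')
    refine h.congr_deriv ?_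
    field_simp
    ring
  -- rewrite the three functions in radial form
  have hu : (fun y : EuclideanSpace ℝ (Fin d) => A / ‖y‖ ^ 4)
      = (fun y : EuclideanSpace ℝ (Fin d) => (fun t : ℝ => A / t ^ 2) (‖y‖ ^ 2)) := by
    funext y; simp only; congr 1; ring
  have hv : (fun y : EuclideanSpace ℝ (Fin d) => -4 * Real.log ‖y‖ + C)
      = (fun y : EuclideanSpace ℝ (Fin d) => (fun t : ℝ => -2 * Real.log t + C) (‖y‖ ^ 2)) := by
    funext y; simp only [Real.log_pow]; push_cast; ring
  have hw : (fun y : EuclideanSpace ℝ (Fin d) => B / ‖y‖ ^ 2)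
      = (fun y : EuclideanSpace ℝ (Fin d) => (fun t : ℝ => B / t) (‖y‖ ^ 2)) := rfl
  -- Laplacians
  have lapu : lap d (fun y => A / ‖y‖ ^ 4) x = 4 * (6 * A / S ^ 4) * S + 2 * d * (-2 * A / S ^ 3) := by
    rw [hu]; exact radial_lap _ _ _ hφu hψu x hx
  have lapv : lap d (fun y => -4 * Real.log ‖y‖ + C) x = 4 * (2 / S ^ 2) * S + 2 * d * (-2 / S) := by
    rw [hv]; exact radial_lap _ _ _ hφv hψv x hx
  have lapw : lap d (fun y => B / ‖y‖ ^ 2) x = 4 * (2 * B / S ^ 3) * S + 2 * d * (-B / S ^ 2) := by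
    rw [hw]; exact radial_lap _ _ _ hφw hψw x hx
  -- gradients
  have gradu : gradient (fun y => A / ‖y‖ ^ 4) x = (2 * (-2 * A / S ^ 3)) • x := by
    rw [hu]; exact radial_grad _ _ hφu x hx
  have gradv : gradient (fun y => -4 * Real.log ‖y‖ + C) x = (2 * (-2 / S)) • x := by
    rw [hv]; exact radial_grad _ _ hφv x hx
  have h4 : ‖x‖ ^ 4 = S ^ 2 := by rw [hSdef]; ring
  refine ⟨?_, ?_, ?_⟩
  · rw [divGrad, lapu, gradu, gradv, lapv]
    rw [real_inner_smul_left, real_inner_smul_right, real_inner_self_eq_norm_sq]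
    simp only [← hSdef, h4]
    field_simp
    ring
  · rw [lapv]
    simp only [hB, ← hSdef]
    field_simp
    ring
  · rw [lapw, h4]
    simp only [hA, hB]
    field_simp
    ring
end

section
/- Let d ≥ 7 be an integer and let A, B, Cc, C₀ be real numbers with A ≠ 0. Suppose that the functions u(x) = A·‖x‖^{−4}, v(x) = Cc·log‖x‖ + C₀, w(x) = B·‖x‖^{−2} satisfy, at every x ∈ ℝ^d with x ≠ 0, the equations Δu(x) − div(u∇v)(x) = 0, Δv(x) + w(x) = 0, and Δw(x) + u(x) = 0. Then necessarily A = 8(d−4)(d−2), B = 4(d−2), and Cc = −4. -/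
lemma hasFDerivAt_radial {d : ℕ} {h h' : ℝ → ℝ} (y : EuclideanSpace ℝ (Fin d))
    (hder : HasDerivAt h (h' (‖y‖^2)) (‖y‖^2)) :
    HasFDerivAt (fun z : EuclideanSpace ℝ (Fin d) => h (‖z‖^2))
      (h' (‖y‖^2) • (2 • innerSL ℝ y)) y :=
  hder.comp_hasFDerivAt y (hasStrictFDerivAt_norm_sq y).hasFDerivAt

lemma gradient_radial {d : ℕ} {h h' : ℝ → ℝ} (x : EuclideanSpace ℝ (Fin d))
    (hder : HasDerivAt h (h' (‖x‖^2)) (‖x‖^2)) :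
    gradient (fun z : EuclideanSpace ℝ (Fin d) => h (‖z‖^2)) x
      = (2 * h' (‖x‖^2)) • x := by
  have hg : HasGradientAt (fun z : EuclideanSpace ℝ (Fin d) => h (‖z‖^2))
      ((2 * h' (‖x‖^2)) • x) x := by
    rw [hasGradientAt_iff_hasFDerivAt]
    have := hasFDerivAt_radial x hder
    refine this.congr_fderiv ?_
    ext v
    simp [real_inner_smul_left]
    ring
  exact hg.gradient

lemma lap_radial {d : ℕ} {h h' h'' : ℝ → ℝ}
    (H1 : ∀ t : ℝ, 0 < t → HasDerivAt h (h' t) t)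
    (H2 : ∀ t : ℝ, 0 < t → HasDerivAt h' (h'' t) t)
    (x : EuclideanSpace ℝ (Fin d)) (hx : x ≠ 0) :
    lap d (fun z => h (‖z‖^2)) x
      = 4 * ‖x‖^2 * h'' (‖x‖^2) + 2 * d * h' (‖x‖^2) := by
  have hxn : (0:ℝ) < ‖x‖ := norm_pos_iff.mpr hx
  have hxpos : (0:ℝ) < ‖x‖^2 := by positivity
  have key : ∀ i : Fin d,
      fderiv ℝ (fun y => fderiv ℝ (fun z : EuclideanSpace ℝ (Fin d) => h (‖z‖^2)) y
        (EuclideanSpace.single i 1)) x (EuclideanSpace.single i 1)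
      = 4 * h'' (‖x‖^2) * (x i)^2 + 2 * h' (‖x‖^2) := by
    intro i
    have hev : (fun y => fderiv ℝ (fun z : EuclideanSpace ℝ (Fin d) => h (‖z‖^2)) y
          (EuclideanSpace.single i 1))
        =ᶠ[nhds x] (fun y => 2 * (h' (‖y‖^2) * y i)) := by
      have hopen : IsOpen {y : EuclideanSpace ℝ (Fin d) | y ≠ 0} :=
        isOpen_compl_singleton
      filter_upwards [hopen.mem_nhds hx] with y hy
      have hyn : (0:ℝ) < ‖y‖ := norm_pos_iff.mpr hy
      have hypos : (0:ℝ) < ‖y‖^2 := by positivity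
      rw [(hasFDerivAt_radial y (H1 _ hypos)).fderiv]
      simp [real_inner_smul_left, EuclideanSpace.inner_single_right]
      ring
    rw [hev.fderiv_eq]
    have hA : HasFDerivAt (fun y : EuclideanSpace ℝ (Fin d) => h' (‖y‖^2))
        (h'' (‖x‖^2) • (2 • innerSL ℝ x)) x := hasFDerivAt_radial x (H2 _ hxpos)
    have hB : HasFDerivAt (fun y : EuclideanSpace ℝ (Fin d) => y i)
        (EuclideanSpace.proj (𝕜 := ℝ) i) x := (EuclideanSpace.proj (𝕜 := ℝ) i).hasFDerivAt
    have hprod : HasFDerivAt (fun y : EuclideanSpace ℝ (Fin d) => 2 * (h' (‖y‖^2) * y i)) _ x :=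
      (hA.mul hB).const_mul (2:ℝ)
    rw [hprod.fderiv]
    simp [real_inner_smul_left, EuclideanSpace.inner_single_right,
      EuclideanSpace.single_apply]
    ring
  unfold lap
  rw [Finset.sum_congr rfl fun i _ => key i]
  rw [Finset.sum_add_distrib, Finset.sum_const, ← Finset.mul_sum]
  have hsum : ∑ i : Fin d, (x i)^2 = ‖x‖^2 := by
    rw [← real_inner_self_eq_norm_sq]
    rw [real_inner_self_eq_norm_sq, EuclideanSpace.norm_sq_eq]; simp [Real.norm_eq_abs, sq_abs]
  rw [hsum]
  simp [Finset.card_univ]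
  ring

/-- For `d ≥ 7`, if the homogeneous profiles
`u(x) = A‖x‖⁻⁴`, `v(x) = Cc·log‖x‖ + C₀`, `w(x) = B‖x‖⁻²` with `A ≠ 0` solve the
stationary chemotaxis system away from the origin, then
`A = 8(d−4)(d−2)`, `B = 4(d−2)` and `Cc = −4`. -/
theorem stmt1 (d : ℕ) (hd : 7 ≤ d) (A B Cc C₀ : ℝ) (hA : A ≠ 0)
    (heq : ∀ x : EuclideanSpace ℝ (Fin d), x ≠ 0 →
      (lap d (fun y => A / ‖y‖ ^ 4) x
          - divGrad d (fun y => A / ‖y‖ ^ 4)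
              (fun y => Cc * Real.log ‖y‖ + C₀) x = 0) ∧
      (lap d (fun y => Cc * Real.log ‖y‖ + C₀) x + B / ‖x‖ ^ 2 = 0) ∧
      (lap d (fun y => B / ‖y‖ ^ 2) x + A / ‖x‖ ^ 4 = 0)) :
    A = 8 * ((d : ℝ) - 4) * ((d : ℝ) - 2) ∧ B = 4 * ((d : ℝ) - 2) ∧ Cc = -4 := by
  -- radial profiles as functions of t = ‖x‖²
  set hu : ℝ → ℝ := fun t => A / t^2 with hu_def
  set hu' : ℝ → ℝ := fun t => -2*A / t^3 with hu'_def
  set hu'' : ℝ → ℝ := fun t => 6*A / t^4 with hu''_def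
  set hv : ℝ → ℝ := fun t => Cc/2 * Real.log t + C₀ with hv_def
  set hv' : ℝ → ℝ := fun t => Cc / (2*t) with hv'_def
  set hv'' : ℝ → ℝ := fun t => -Cc / (2*t^2) with hv''_def
  set hw : ℝ → ℝ := fun t => B / t with hw_def
  set hw' : ℝ → ℝ := fun t => -B / t^2 with hw'_def
  set hw'' : ℝ → ℝ := fun t => 2*B / t^3 with hw''_def
  have Hu1 : ∀ t : ℝ, 0 < t → HasDerivAt hu (hu' t) t := by
    intro t ht
    have := (hasDerivAt_const t A).div (hasDerivAt_pow 2 t) (by positivity)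
    refine this.congr_deriv ?_
    simp only [hu'_def]
    field_simp [ht.ne']
    ring
  have Hu2 : ∀ t : ℝ, 0 < t → HasDerivAt hu' (hu'' t) t := by
    intro t ht
    have := (hasDerivAt_const t (-2*A)).div (hasDerivAt_pow 3 t) (by positivity)
    refine this.congr_deriv ?_
    simp only [hu''_def]
    field_simp [ht.ne']
    ring
  have Hv1 : ∀ t : ℝ, 0 < t → HasDerivAt hv (hv' t) t := by
    intro t ht
    have := ((Real.hasDerivAt_log ht.ne').const_mul (Cc/2)).add_const C₀
    refine this.congr_deriv ?_
    simp only [hv'_def]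
    field_simp [ht.ne']
  have Hv2 : ∀ t : ℝ, 0 < t → HasDerivAt hv' (hv'' t) t := by
    intro t ht
    have h2t : HasDerivAt (fun s : ℝ => 2*s) 2 t := by
      simpa using (hasDerivAt_id t).const_mul (2:ℝ)
    have := (hasDerivAt_const t Cc).div h2t (by positivity)
    refine this.congr_deriv ?_
    simp only [hv''_def]
    field_simp [ht.ne']
    ring
  have Hw1 : ∀ t : ℝ, 0 < t → HasDerivAt hw (hw' t) t := by
    intro t ht
    have := (hasDerivAt_const t B).div (hasDerivAt_id t) ht.ne'
    refine this.congr_deriv ?_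
    simp only [hw'_def, id]
    field_simp [ht.ne']
    ring
  have Hw2 : ∀ t : ℝ, 0 < t → HasDerivAt hw' (hw'' t) t := by
    intro t ht
    have := (hasDerivAt_const t (-B)).div (hasDerivAt_pow 2 t) (by positivity)
    refine this.congr_deriv ?_
    simp only [hw''_def]
    field_simp [ht.ne']
    ring
  -- rewrite the statement's functions as radial profiles
  have hueq : (fun y : EuclideanSpace ℝ (Fin d) => A / ‖y‖ ^ 4)
      = fun y => hu (‖y‖^2) := by
    funext y
    simp only [hu_def, ← pow_mul]
  have hveq : (fun y : EuclideanSpace ℝ (Fin d) => Cc * Real.log ‖y‖ + C₀)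
      = fun y => hv (‖y‖^2) := by
    funext y
    simp only [hv_def, Real.log_pow]
    push_cast
    ring
  have hweq : (fun y : EuclideanSpace ℝ (Fin d) => B / ‖y‖ ^ 2)
      = fun y => hw (‖y‖^2) := by
    funext y
    simp only [hw_def]
  -- evaluate at the unit point
  have hd0 : 0 < d := by omega
  let i₀ : Fin d := ⟨0, hd0⟩
  set x₀ : EuclideanSpace ℝ (Fin d) := EuclideanSpace.single i₀ 1 with hx₀def
  have hx₀ : x₀ ≠ 0 := by
    intro hc
    have : (x₀ : EuclideanSpace ℝ (Fin d)) i₀ = 0 := by rw [hc]; rfl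
    simp [hx₀def, EuclideanSpace.single_apply] at this
  have hnorm : ‖x₀‖ = 1 := by simp [hx₀def]
  obtain ⟨e1, e2, e3⟩ := heq x₀ hx₀
  rw [hueq, hveq] at e1
  rw [hveq] at e2
  rw [hweq] at e3
  rw [lap_radial Hv1 Hv2 x₀ hx₀, hnorm] at e2
  rw [lap_radial Hw1 Hw2 x₀ hx₀, hnorm] at e3
  unfold divGrad at e1
  rw [gradient_radial x₀ (Hu1 _ (by rw [hnorm]; norm_num)),
      gradient_radial x₀ (Hv1 _ (by rw [hnorm]; norm_num)),
      real_inner_smul_left, real_inner_smul_right, real_inner_self_eq_norm_sq,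
      lap_radial Hu1 Hu2 x₀ hx₀, lap_radial Hv1 Hv2 x₀ hx₀, hnorm] at e1
  simp only [hu_def, hu'_def, hu''_def, hv_def, hv'_def, hv''_def, hw_def,
    hw'_def, hw''_def, hnorm] at e1 e2 e3
  norm_num at e1 e2 e3
  -- now pure algebra
  set D : ℝ := (d : ℝ) with hD_def
  have hD : (7:ℝ) ≤ D := by rw [hD_def]; exact_mod_cast hd
  have hD6 : D - 6 ≠ 0 := by intro hc; nlinarith
  -- e1 : lap u - (inner + u * lap v) = 0 etc; derive Cc = -4 first
  have hCc : Cc = -4 := by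
    have key : A * ((D - 6) * (Cc + 4)) = 0 := by nlinarith [e1, e2, e3]
    rcases mul_eq_zero.mp key with h | h
    · exact absurd h hA
    · rcases mul_eq_zero.mp h with h' | h'
      · exact absurd h' hD6
      · linarith
  have hB : B = 4 * (D - 2) := by
    rw [hCc] at e2; linarith
  have hAval : A = 8 * (D - 4) * (D - 2) := by
    rw [hB] at e3; linarith
  exact ⟨hAval, hB, hCc⟩
end

section
/- (Comparison principle for the mass-function system, whole half-line case.) Let d ≥ 1 be an integer and T > 0. Let M̲, M̄, W̲, W̄ : [0,∞)×[0,T) → ℝ be continuous, continuously differentiable on [0,∞)×(0,T), twice continuously differentiable in r on (0,∞)×(0,T), and bounded on [0,∞)×[0,T₀] for every T₀ < T. Assume that either (r·∂_r M̲ + d·M̲ ≥ 0 on (0,∞)×(0,T) and sup_{(r,t)∈(0,∞)×(0,T₀)} |r·∂_r M̲(r,t)| < ∞ for every T₀ < T) or (r·∂_r M̄ + d·M̄ ≥ 0 on (0,∞)×(0,T) and sup_{(r,t)∈(0,∞)×(0,T₀)} |r·∂_r M̄(r,t)| < ∞ for every T₀ < T). Assume that for all (r,t) ∈ (0,∞)×(0,T):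 ∂_t M̲ − ∂_{rr} M̲ − ((d+1)/r)∂_r M̲ − r·(∂_r M̲)·W̲ − d·M̲·W̲ ≤ ∂_t M̄ − ∂_{rr} M̄ − ((d+1)/r)∂_r M̄ − r·(∂_r M̄)·W̄ − d·M̄·W̄, and ∂_t W̲ − ∂_{rr} W̲ − ((d+1)/r)∂_r W̲ − M̲ ≤ ∂_t W̄ − ∂_{rr} W̄ − ((d+1)/r)∂_r W̄ − M̄. If M̲(r,0) ≤ M̄(r,0) and W̲(r,0) ≤ W̄(r,0) for all r > 0, then M̲(r,t) ≤ M̄(r,t) and W̲(r,t) ≤ W̄(r,t) for all (r,t) ∈ (0,∞)×[0,T). -/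
/-- Partial derivative in the time variable. -/
noncomputable def pderivT (f : ℝ → ℝ → ℝ) (r t : ℝ) : ℝ := deriv (fun s => f r s) t

/-- Partial derivative in the radial variable. -/
noncomputable def pderivR (f : ℝ → ℝ → ℝ) (r t : ℝ) : ℝ := deriv (fun ρ => f ρ t) r

/-- Second partial derivative in the radial variable. -/
noncomputable def pderivRR (f : ℝ → ℝ → ℝ) (r t : ℝ) : ℝ := deriv (fun ρ => pderivR f ρ t) r

/-- Regularity for the mass functions: continuous on `[0,∞) × [0,T)`, continuously
differentiable on `[0,∞) × (0,T)`, twice continuously differentiable in `r` on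
`(0,∞) × (0,T)`, and bounded on `[0,∞) × [0,T₀]` for every `T₀ < T`. -/
def MassReg (f : ℝ → ℝ → ℝ) (T : ℝ) : Prop :=
  ContinuousOn (fun p : ℝ × ℝ => f p.1 p.2) (Set.Ici 0 ×ˢ Set.Ico 0 T) ∧
  (∀ r ∈ Set.Ici (0 : ℝ), ∀ t ∈ Set.Ioo (0 : ℝ) T, DifferentiableAt ℝ (fun s => f r s) t) ∧
  (∀ r ∈ Set.Ici (0 : ℝ), ∀ t ∈ Set.Ioo (0 : ℝ) T, DifferentiableAt ℝ (fun ρ => f ρ t) r) ∧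
  ContinuousOn (fun p : ℝ × ℝ => pderivT f p.1 p.2) (Set.Ici 0 ×ˢ Set.Ioo 0 T) ∧
  ContinuousOn (fun p : ℝ × ℝ => pderivR f p.1 p.2) (Set.Ici 0 ×ˢ Set.Ioo 0 T) ∧
  (∀ r ∈ Set.Ioi (0 : ℝ), ∀ t ∈ Set.Ioo (0 : ℝ) T,
    DifferentiableAt ℝ (fun ρ => pderivR f ρ t) r) ∧
  ContinuousOn (fun p : ℝ × ℝ => pderivRR f p.1 p.2) (Set.Ioi 0 ×ˢ Set.Ioo 0 T) ∧
  (∀ T₀ < T, ∃ Cb : ℝ, ∀ r ∈ Set.Ici (0 : ℝ), ∀ t ∈ Set.Icc 0 T₀, |f r t| ≤ Cb)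

section ComparisonHelpers

open Set

/-- Left-touching: if `g ≥ 0` on `[0,t*]`, `g t* = 0`, `g` differentiable at `t* > 0`,
then `deriv g t* ≤ 0`. -/
lemma left_touch {g : ℝ → ℝ} {t0 : ℝ} (ht0 : 0 < t0)
    (hge : ∀ t ∈ Set.Icc 0 t0, 0 ≤ g t) (h0 : g t0 = 0)
    (hdiff : DifferentiableAt ℝ g t0) : deriv g t0 ≤ 0 := by
  by_contra h
  push_neg at h
  have hs : Filter.Tendsto (slope g t0) (nhdsWithin t0 {t0}ᶜ) (nhds (deriv g t0)) :=
    hasDerivAt_iff_tendsto_slope.mp hdiff.hasDerivAt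
  have hs' : Filter.Tendsto (slope g t0) (nhdsWithin t0 (Set.Iio t0)) (nhds (deriv g t0)) :=
    hs.mono_left (nhdsWithin_mono _ (fun x hx => ne_of_lt hx))
  have hev : ∀ᶠ t in nhdsWithin t0 (Set.Iio t0), 0 < slope g t0 t :=
    hs'.eventually (eventually_gt_nhds h)
  have hev2 : ∀ᶠ t in nhdsWithin t0 (Set.Iio t0), (0:ℝ) < t :=
    eventually_nhdsWithin_of_eventually_nhds (eventually_gt_nhds ht0)
  have hmem : ∀ᶠ t in nhdsWithin t0 (Set.Iio t0), t ∈ Set.Iio t0 :=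
    eventually_mem_nhdsWithin
  obtain ⟨t, h1, h2, h3⟩ := (hev.and (hev2.and hmem)).exists
  have hgt : 0 ≤ g t := hge t ⟨le_of_lt h2, le_of_lt h3⟩
  have : slope g t0 t ≤ 0 := by
    rw [slope_def_field, h0]
    have hneg : t - t0 < 0 := sub_neg.mpr h3
    apply div_nonpos_of_nonneg_of_nonpos
    · simpa using hgt
    · exact le_of_lt hneg
  linarith

/-- At an interior minimum over `(0,∞)`, the first derivative vanishes and the
second derivative is nonnegative. -/
lemma min_derivs {f : ℝ → ℝ} {a : ℝ} (ha : 0 < a)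
    (hdiff : ∀ x ∈ Set.Ioi (0:ℝ), DifferentiableAt ℝ f x)
    (hmin : ∀ x ∈ Set.Ioi (0:ℝ), f a ≤ f x)
    (hdiff2 : DifferentiableAt ℝ (deriv f) a) :
    deriv f a = 0 ∧ 0 ≤ deriv (deriv f) a := by
  have hloc : IsLocalMin f a := by
    filter_upwards [isOpen_Ioi.mem_nhds (show a ∈ Set.Ioi (0:ℝ) from ha)] with x hx
    exact hmin x hx
  have h1 : deriv f a = 0 := hloc.deriv_eq_zero
  refine ⟨h1, ?_⟩
  by_contra h
  push_neg at h
  -- deriv f is negative just to the right of a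
  have hs : Filter.Tendsto (slope (deriv f) a) (nhdsWithin a {a}ᶜ)
      (nhds (deriv (deriv f) a)) := hasDerivAt_iff_tendsto_slope.mp hdiff2.hasDerivAt
  have hs' : Filter.Tendsto (slope (deriv f) a) (nhdsWithin a (Set.Ioi a))
      (nhds (deriv (deriv f) a)) :=
    hs.mono_left (nhdsWithin_mono _ (fun x hx => ne_of_gt hx))
  have hev : ∀ᶠ x in nhdsWithin a (Set.Ioi a), slope (deriv f) a x < 0 :=
    hs'.eventually (eventually_lt_nhds h)
  have hev' : ∀ᶠ x in nhdsWithin a (Set.Ioi a), deriv f x < 0 := by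
    filter_upwards [hev, eventually_mem_nhdsWithin] with x hx hx'
    have hxa : 0 < x - a := sub_pos.mpr hx'
    have := hx
    rw [slope_def_field, h1, sub_zero] at this
    have := (div_neg_iff).mp this
    rcases this with ⟨h1', h2'⟩ | ⟨h1', h2'⟩
    · linarith
    · exact h1'
  obtain ⟨u, hu, husub⟩ := mem_nhdsGT_iff_exists_Ioo_subset.mp hev'
  set z := (a + min u (a+1)) / 2 with hz
  have hau : a < min u (a+1) := lt_min hu (by linarith)
  have hz1 : a < z := by simp only [hz]; linarith
  have hz2 : z < min u (a+1) := by simp only [hz]; linarith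
  have hanti : StrictAntiOn f (Set.Icc a z) := by
    apply strictAntiOn_of_deriv_neg (convex_Icc a z)
    · intro x hx
      exact (hdiff x (lt_of_lt_of_le ha hx.1)).continuousAt.continuousWithinAt
    · intro x hx
      rw [interior_Icc] at hx
      exact husub ⟨hx.1, lt_of_lt_of_le hx.2 (le_of_lt (lt_of_lt_of_le hz2 (min_le_left _ _)))⟩
  have : f z < f a := hanti ⟨le_refl a, le_of_lt hz1⟩ ⟨le_of_lt hz1, le_refl z⟩ hz1
  have : f a ≤ f z := hmin z (lt_trans ha hz1)
  linarith

/-- First-touching point extraction on a compact rectangle. -/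
lemma first_touch {F : ℝ × ℝ → ℝ} {δ R T₀ : ℝ} (hδR : δ < R) (hT₀ : 0 < T₀)
    (hF : ContinuousOn F (Set.Icc δ R ×ˢ Set.Icc 0 T₀))
    (hinit : ∀ r ∈ Set.Icc δ R, 0 < F (r, 0))
    (hne : ∃ p ∈ Set.Icc δ R ×ˢ Set.Icc 0 T₀, F p ≤ 0) :
    ∃ p ∈ Set.Icc δ R ×ˢ Set.Icc 0 T₀, 0 < p.2 ∧ F p = 0 ∧
      ∀ q ∈ Set.Icc δ R ×ˢ Set.Icc 0 T₀, q.2 ≤ p.2 → 0 ≤ F q := by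
  set K := Set.Icc δ R ×ˢ Set.Icc 0 T₀ with hK
  have hKc : IsCompact K := (isCompact_Icc).prod (isCompact_Icc)
  have hKcl : IsClosed K := (isClosed_Icc).prod (isClosed_Icc)
  set S := {p ∈ K | F p ≤ 0} with hS
  have hScl : IsClosed S := by
    have : S = K ∩ F ⁻¹' (Set.Iic 0) := by
      ext p; simp [hS, Set.mem_sep_iff, Set.mem_preimage, Set.mem_Iic, and_comm]
    rw [this]
    exact hF.preimage_isClosed_of_isClosed hKcl isClosed_Iic
  have hSco : IsCompact S := hKc.of_isClosed_subset hScl (fun p hp => hp.1)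
  obtain ⟨p0, hp0S⟩ := hne
  have hSne : S.Nonempty := ⟨p0, hp0S.1, hp0S.2⟩
  obtain ⟨p, hpS, hpmin⟩ := hSco.exists_isMinOn hSne (continuous_snd.continuousOn)
  have hpK : p ∈ K := hpS.1
  have hpF : F p ≤ 0 := hpS.2
  -- (a) everything strictly before p.2 is positive
  have ha : ∀ q ∈ K, q.2 < p.2 → 0 < F q := by
    intro q hq hlt
    by_contra h
    push_neg at h
    have : q ∈ S := ⟨hq, h⟩
    have := hpmin this
    simp only [Set.mem_setOf_eq] at this
    exact absurd this (not_le.mpr hlt)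
  -- p.2 > 0
  have hp2pos : 0 < p.2 := by
    rcases lt_or_eq_of_le hpK.2.1 with h | h
    · exact h
    · exfalso
      have h1 : (p.1, (0:ℝ)) = p := by
        ext <;> simp [h.symm] <;> rfl
      have := hinit p.1 hpK.1
      rw [h1] at this
      linarith
  -- the continuity-in-t argument: if F (r, s) < 0 with r ∈ Icc δ R, 0 < s ≤ T₀,
  -- then there is t < s, t > 0, with F (r, t) < 0
  have hcont_arg : ∀ r ∈ Set.Icc δ R, ∀ s, 0 < s → s ≤ T₀ → F (r, s) < 0 →
      ∃ t, 0 < t ∧ t < s ∧ F (r, t) < 0 := by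
    intro r hr s hs hsT hFneg
    have hmem : (r, s) ∈ K := ⟨hr, le_of_lt hs, hsT⟩
    have hcw : ContinuousWithinAt (fun t => F (r, t)) (Set.Ioo 0 s) s := by
      have h1 : ContinuousWithinAt F K (r, s) := hF (r, s) hmem
      have h2 : ContinuousWithinAt (fun t : ℝ => ((r, t) : ℝ × ℝ)) (Set.Ioo 0 s) s :=
        (Continuous.continuousWithinAt (by continuity))
      apply ContinuousWithinAt.comp h1 h2
      intro t ht
      exact ⟨hr, le_of_lt ht.1, le_trans (le_of_lt ht.2) hsT⟩
    haveI : (nhdsWithin s (Set.Ioo 0 s)).NeBot := by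
      apply mem_closure_iff_nhdsWithin_neBot.mp
      rw [closure_Ioo (ne_of_lt hs)]
      exact ⟨le_of_lt hs, le_refl s⟩
    have hev : ∀ᶠ t in nhdsWithin s (Set.Ioo 0 s), F (r, t) < 0 :=
      hcw.eventually (eventually_lt_nhds hFneg)
    obtain ⟨t, h1, h2⟩ := (hev.and eventually_mem_nhdsWithin).exists
    exact ⟨t, h2.1, h2.2, h1⟩
  -- F p = 0
  have hFp0 : F p = 0 := by
    rcases lt_or_eq_of_le hpF with h | h
    · exfalso
      obtain ⟨t, ht1, ht2, ht3⟩ := hcont_arg p.1 hpK.1 p.2 hp2pos hpK.2.2 (by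
        have : (p.1, p.2) = p := rfl
        rw [this]; exact h)
      have : (p.1, t) ∈ K := ⟨hpK.1, le_of_lt ht1, le_trans (le_of_lt ht2) hpK.2.2⟩
      have := ha (p.1, t) this ht2
      linarith
    · exact h
  refine ⟨p, hpK, hp2pos, hFp0, ?_⟩
  intro q hq hle
  by_contra h
  push_neg at h
  rcases lt_or_eq_of_le hle with hlt | heq
  · exact absurd (ha q hq hlt) (not_lt.mpr (le_of_lt h))
  · have hq2pos : 0 < q.2 := heq ▸ hp2pos
    obtain ⟨t, ht1, ht2, ht3⟩ := hcont_arg q.1 hq.1 q.2 hq2pos hq.2.2 (by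
      have : (q.1, q.2) = q := rfl
      rw [this]; exact h)
    have hmem : (q.1, t) ∈ K := ⟨hq.1, le_of_lt ht1, le_trans (le_of_lt ht2) hq.2.2⟩
    have := ha (q.1, t) hmem (lt_of_lt_of_le ht2 hle)
    linarith

/-- radial derivative of the barrier -/
lemma psi_hasDerivR (D ε η lam t : ℝ) {r : ℝ} (hr : r ≠ 0) :
    HasDerivAt (fun ρ : ℝ => Real.exp (lam*t) * (ε*(1+ρ^2) + η*ρ^(-D)))
      (Real.exp (lam*t) * (ε*(2*r) + η*(-D * r^(-D-1)))) r := by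
  have h1 : HasDerivAt (fun ρ : ℝ => ρ^(-D)) (-D * r^(-D-1)) r := by
    have := Real.hasDerivAt_rpow_const (p := -D) (Or.inl hr)
    convert this using 1
  have h2 : HasDerivAt (fun ρ : ℝ => ε*(1+ρ^2)) (ε*(2*r)) r := by
    have := ((hasDerivAt_pow 2 r).const_add 1).const_mul ε
    refine this.congr_deriv ?_
    push_cast; ring
  exact ((h2.add (h1.const_mul η)).const_mul _)

/-- second radial derivative of the barrier -/
lemma psi_hasDerivRR (D ε η lam t : ℝ) {r : ℝ} (hr : r ≠ 0) :
    HasDerivAt (fun ρ : ℝ => Real.exp (lam*t) * (ε*(2*ρ) + η*(-D * ρ^(-D-1))))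
      (Real.exp (lam*t) * (ε*2 + η*(-D * ((-D-1) * r^(-D-2))))) r := by
  have h1 : HasDerivAt (fun ρ : ℝ => ρ^(-D-1)) ((-D-1) * r^(-D-2)) r := by
    have := Real.hasDerivAt_rpow_const (p := -D-1) (Or.inl hr)
    convert this using 2
    ring
  have h2 : HasDerivAt (fun ρ : ℝ => ε*(2*ρ)) (ε*2) r := by
    have := ((hasDerivAt_id r).const_mul (2:ℝ)).const_mul ε
    refine this.congr_deriv ?_
    ring
  exact (h2.add ((h1.const_mul (-D)).const_mul η)).const_mul _

/-- time derivative of the barrier -/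
lemma psi_hasDerivT (lam C t : ℝ) :
    HasDerivAt (fun s : ℝ => Real.exp (lam*s) * C) (lam * (Real.exp (lam*t) * C)) t := by
  have h1 : HasDerivAt (fun s : ℝ => lam * s) lam t := by
    simpa using (hasDerivAt_id t).const_mul lam
  have := (h1.exp).mul_const C
  refine this.congr_deriv ?_
  ring

set_option maxHeartbeats 1000000 in
/-- the arithmetic contradiction at the touching point, `m`-equation case -/
lemma contra_m (D ε η E s P2 a Mv MRR MT Vv cv wv B C1 lam ψv ψr ψrr : ℝ)
    (hD : 1 ≤ D) (hε : 0 < ε) (hη : 0 < η) (hE : 0 < E) (hs : 0 < s) (hP2 : 0 < P2)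
    (hψv : ψv = E*(ε*(1+s^2) + η*(P2*s^2)))
    (hψr : ψr = E*(ε*(2*s) + η*(-D*(P2*s))))
    (hψrr : ψrr = E*(ε*2 + η*(-D * ((-D-1) * P2))))
    (hlam : lam = 2*D+6 + B*(D+2) + C1)
    (h1 : a + ψr = 0) (h2 : 0 ≤ MRR + ψrr) (h3 : MT + lam*ψv ≤ 0)
    (h4 : MRR + (D+1)/s*a + s*Vv*a + D*Vv*Mv + cv*wv ≤ MT)
    (h5 : Mv + ψv = 0) (h6 : 0 ≤ wv + ψv)
    (hV : |Vv| ≤ B) (hc0 : 0 ≤ cv) (hc1 : cv ≤ C1) : False := by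
  have hB0 : 0 ≤ B := le_trans (abs_nonneg _) hV
  have hC0 : 0 ≤ C1 := le_trans hc0 hc1
  have ha : a = -ψr := by linarith
  have hMv : Mv = -ψv := by linarith
  have hψv0 : 0 ≤ ψv := by
    rw [hψv]; positivity
  -- divide term
  have hdiv : (D+1)/s*a = -((D+1)*(E*(ε*2 + η*(-D*P2)))) := by
    rw [ha, hψr]; field_simp
  -- V term bound
  have hVterm : -(B*(E*(ε*(2*s^2 + D + D*s^2)))) ≤ s*Vv*a + D*Vv*Mv := by
    have hX : s*Vv*a + D*Vv*Mv = -(Vv*(E*(ε*(2*s^2 + D + D*s^2)))) := by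
      rw [ha, hMv, hψr, hψv]; ring
    rw [hX]
    have hXpos : 0 ≤ E*(ε*(2*s^2 + D + D*s^2)) := by positivity
    have : |Vv*(E*(ε*(2*s^2 + D + D*s^2)))| ≤ B*(E*(ε*(2*s^2 + D + D*s^2))) := by
      rw [abs_mul, abs_of_nonneg hXpos]
      exact mul_le_mul_of_nonneg_right hV hXpos
    have h2'' := le_abs_self (Vv*(E*(ε*(2*s^2 + D + D*s^2))))
    linarith
  -- c term bound
  have hcterm : -(C1*ψv) ≤ cv*wv := by
    have h1' : -ψv ≤ wv := by linarith
    have := mul_le_mul_of_nonneg_left h1' hc0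
    have h2' : cv*ψv ≤ C1*ψv := mul_le_mul_of_nonneg_right hc1 hψv0
    have h3' : cv * -ψv = -(cv*ψv) := by ring
    linarith
  -- assemble
  have hMRR : -ψrr ≤ MRR := by linarith
  have hfinal : -(lam*ψv) ≥ -ψrr - (D+1)*(E*(ε*2 + η*(-D*P2)))
      - B*(E*(ε*(2*s^2 + D + D*s^2))) - C1*ψv := by linarith [h4, h3, hMRR, hdiv]
  have hdiff : lam*ψv - ψrr - (D+1)*(E*(ε*2 + η*(-D*P2)))
      - B*(E*(ε*(2*s^2 + D + D*s^2))) - C1*ψv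
      = E*ε*(2 + (2*D+6)*s^2 + 2*B) + η*E*P2*s^2*(2*D+6+B*(D+2)) := by
    rw [hψv, hψrr, hlam]; ring
  have hpos1 : 0 < E*ε*(2 + (2*D+6)*s^2 + 2*B) := by
    apply mul_pos (mul_pos hE hε)
    nlinarith [sq_nonneg s]
  have hpos2 : 0 ≤ η*E*P2*s^2*(2*D+6+B*(D+2)) := by
    apply mul_nonneg (mul_nonneg (mul_nonneg (mul_nonneg hη.le hE.le) hP2.le) (sq_nonneg s))
    nlinarith
  linarith

set_option maxHeartbeats 1000000 in
/-- the arithmetic contradiction at the touching point, `w`-equation case -/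
lemma contra_w (D ε η E s P2 a Wv WRR WT Mv lam ψv ψr ψrr : ℝ)
    (hD : 1 ≤ D) (hε : 0 < ε) (hη : 0 < η) (hE : 0 < E) (hs : 0 < s) (hP2 : 0 < P2)
    (hψv : ψv = E*(ε*(1+s^2) + η*(P2*s^2)))
    (hψr : ψr = E*(ε*(2*s) + η*(-D*(P2*s))))
    (hψrr : ψrr = E*(ε*2 + η*(-D * ((-D-1) * P2))))
    (hlam : 2*D+5 ≤ lam)
    (h1 : a + ψr = 0) (h2 : 0 ≤ WRR + ψrr) (h3 : WT + lam*ψv ≤ 0)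
    (h4 : WRR + (D+1)/s*a + Mv ≤ WT)
    (h5 : Wv + ψv = 0) (h6 : 0 ≤ Mv + ψv) : False := by
  have ha : a = -ψr := by linarith
  have hψv0 : 0 ≤ ψv := by rw [hψv]; positivity
  have hdiv : (D+1)/s*a = -((D+1)*(E*(ε*2 + η*(-D*P2)))) := by
    rw [ha, hψr]; field_simp
  have hMv : -ψv ≤ Mv := by linarith
  have hfinal : -(lam*ψv) ≥ -ψrr - (D+1)*(E*(ε*2 + η*(-D*P2))) - ψv := by
    linarith
  have hdiff : lam*ψv - ψrr - (D+1)*(E*(ε*2 + η*(-D*P2))) - ψv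
      = E*ε*((lam-1)*(1+s^2) - (2*D+4)) + η*E*P2*s^2*(lam-1) := by
    rw [hψv, hψrr]; ring
  have hpos1 : 0 < E*ε*((lam-1)*(1+s^2) - (2*D+4)) := by
    apply mul_pos (mul_pos hE hε)
    nlinarith [mul_pos hs hs, sq_nonneg s]
  have hpos2 : 0 ≤ η*E*P2*s^2*(lam-1) := by
    apply mul_nonneg (mul_nonneg (mul_nonneg (mul_nonneg hη.le hE.le) hP2.le) (sq_nonneg s))
    linarith
  rw [hψv, hψrr] at hfinal
  rw [hψv, hψrr] at hdiff
  linarith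

/-- Derivative information at a first-touching point. -/
lemma touch_derivs (D ε η lam : ℝ) (f : ℝ → ℝ → ℝ) {s t0 : ℝ} (hs : 0 < s) (ht0 : 0 < t0)
    (hft : DifferentiableAt ℝ (fun τ => f s τ) t0)
    (hfr : ∀ x ∈ Set.Ioi (0:ℝ), DifferentiableAt ℝ (fun ρ => f ρ t0) x)
    (hfrr : DifferentiableAt ℝ (fun ρ => deriv (fun ρ' => f ρ' t0) ρ) s)
    (hminr : ∀ x ∈ Set.Ioi (0:ℝ),
      f s t0 + Real.exp (lam*t0) * (ε*(1+s^2) + η*s^(-D))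
        ≤ f x t0 + Real.exp (lam*t0) * (ε*(1+x^2) + η*x^(-D)))
    (htime : ∀ τ ∈ Set.Icc (0:ℝ) t0, 0 ≤ f s τ + Real.exp (lam*τ) * (ε*(1+s^2) + η*s^(-D)))
    (hzero : f s t0 + Real.exp (lam*t0) * (ε*(1+s^2) + η*s^(-D)) = 0) :
    deriv (fun ρ => f ρ t0) s + Real.exp (lam*t0) * (ε*(2*s) + η*(-D * s^(-D-1))) = 0 ∧
    0 ≤ deriv (fun ρ => deriv (fun ρ' => f ρ' t0) ρ) s
        + Real.exp (lam*t0) * (ε*2 + η*(-D * ((-D-1) * s^(-D-2)))) ∧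
    deriv (fun τ => f s τ) t0 + lam * (Real.exp (lam*t0) * (ε*(1+s^2) + η*s^(-D))) ≤ 0 := by
  have hsne : s ≠ 0 := ne_of_gt hs
  set g : ℝ → ℝ := fun ρ => f ρ t0 + Real.exp (lam*t0) * (ε*(1+ρ^2) + η*ρ^(-D)) with hgdef
  have hgdiff : ∀ x ∈ Set.Ioi (0:ℝ), DifferentiableAt ℝ g x := fun x hx =>
    (hfr x hx).add (psi_hasDerivR D ε η lam t0 (ne_of_gt hx)).differentiableAt
  have hgderiv : ∀ x ∈ Set.Ioi (0:ℝ), HasDerivAt g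
      (deriv (fun ρ => f ρ t0) x + Real.exp (lam*t0) * (ε*(2*x) + η*(-D * x^(-D-1)))) x :=
    fun x hx => ((hfr x hx).hasDerivAt).add (psi_hasDerivR D ε η lam t0 (ne_of_gt hx))
  have hEq : (fun x => deriv g x) =ᶠ[nhds s]
      (fun x => deriv (fun ρ => f ρ t0) x
        + Real.exp (lam*t0) * (ε*(2*x) + η*(-D * x^(-D-1)))) := by
    filter_upwards [isOpen_Ioi.mem_nhds hs] with x hx
    exact (hgderiv x hx).deriv
  have hd2' : DifferentiableAt ℝ
      (fun x => deriv (fun ρ => f ρ t0) x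
        + Real.exp (lam*t0) * (ε*(2*x) + η*(-D * x^(-D-1)))) s :=
    hfrr.add (psi_hasDerivRR D ε η lam t0 hsne).differentiableAt
  have hgd2 : DifferentiableAt ℝ (deriv g) s := hd2'.congr_of_eventuallyEq hEq
  obtain ⟨hg1, hg2⟩ := min_derivs hs hgdiff hminr hgd2
  refine ⟨?_, ?_, ?_⟩
  · have := (hgderiv s hs).deriv
    rw [hg1] at this
    linarith [this.symm]
  · have he : deriv (deriv g) s = deriv (fun x => deriv (fun ρ => f ρ t0) x
        + Real.exp (lam*t0) * (ε*(2*x) + η*(-D * x^(-D-1)))) s := hEq.deriv_eq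
    have hv : HasDerivAt (fun x => deriv (fun ρ => f ρ t0) x
        + Real.exp (lam*t0) * (ε*(2*x) + η*(-D * x^(-D-1))))
        (deriv (fun ρ => deriv (fun ρ' => f ρ' t0) ρ) s
          + Real.exp (lam*t0) * (ε*2 + η*(-D * ((-D-1) * s^(-D-2))))) s :=
      (hfrr.hasDerivAt).add (psi_hasDerivRR D ε η lam t0 hsne)
    rw [he, hv.deriv] at hg2
    exact hg2
  · have hgT : DifferentiableAt ℝ
        (fun τ => f s τ + Real.exp (lam*τ) * (ε*(1+s^2) + η*s^(-D))) t0 :=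
      hft.add (psi_hasDerivT lam _ t0).differentiableAt
    have hval : HasDerivAt (fun τ => f s τ + Real.exp (lam*τ) * (ε*(1+s^2) + η*s^(-D)))
        (deriv (fun τ => f s τ) t0
          + lam * (Real.exp (lam*t0) * (ε*(1+s^2) + η*s^(-D)))) t0 :=
      (hft.hasDerivAt).add (psi_hasDerivT lam _ t0)
    have := left_touch ht0 htime hzero hgT
    rw [hval.deriv] at this
    exact this

set_option maxHeartbeats 4000000 in
/-- Key comparison lemma for the reduced system. -/
lemma key (d : ℕ) (hd : 1 ≤ d) {T₀ : ℝ} (hT₀ : 0 < T₀)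
    (m w V c : ℝ → ℝ → ℝ) (Bm B C₁ : ℝ) (hB : 0 ≤ B) (hC : 0 ≤ C₁)
    (hmc : ContinuousOn (fun p : ℝ × ℝ => m p.1 p.2) (Set.Ioi 0 ×ˢ Set.Icc 0 T₀))
    (hwc : ContinuousOn (fun p : ℝ × ℝ => w p.1 p.2) (Set.Ioi 0 ×ˢ Set.Icc 0 T₀))
    (hmt : ∀ r ∈ Set.Ioi (0:ℝ), ∀ t ∈ Set.Ioc (0:ℝ) T₀, DifferentiableAt ℝ (fun s => m r s) t)
    (hwt : ∀ r ∈ Set.Ioi (0:ℝ), ∀ t ∈ Set.Ioc (0:ℝ) T₀, DifferentiableAt ℝ (fun s => w r s) t)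
    (hmr : ∀ r ∈ Set.Ioi (0:ℝ), ∀ t ∈ Set.Ioc (0:ℝ) T₀, DifferentiableAt ℝ (fun ρ => m ρ t) r)
    (hwr : ∀ r ∈ Set.Ioi (0:ℝ), ∀ t ∈ Set.Ioc (0:ℝ) T₀, DifferentiableAt ℝ (fun ρ => w ρ t) r)
    (hmrr : ∀ r ∈ Set.Ioi (0:ℝ), ∀ t ∈ Set.Ioc (0:ℝ) T₀,
      DifferentiableAt ℝ (fun ρ => deriv (fun ρ' => m ρ' t) ρ) r)
    (hwrr : ∀ r ∈ Set.Ioi (0:ℝ), ∀ t ∈ Set.Ioc (0:ℝ) T₀,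
      DifferentiableAt ℝ (fun ρ => deriv (fun ρ' => w ρ' t) ρ) r)
    (hbm : ∀ r ∈ Set.Ioi (0:ℝ), ∀ t ∈ Set.Icc (0:ℝ) T₀, |m r t| ≤ Bm ∧ |w r t| ≤ Bm)
    (hVb : ∀ r ∈ Set.Ioi (0:ℝ), ∀ t ∈ Set.Ioc (0:ℝ) T₀, |V r t| ≤ B)
    (hcb : ∀ r ∈ Set.Ioi (0:ℝ), ∀ t ∈ Set.Ioc (0:ℝ) T₀, 0 ≤ c r t ∧ c r t ≤ C₁)
    (hpde1 : ∀ r ∈ Set.Ioi (0:ℝ), ∀ t ∈ Set.Ioc (0:ℝ) T₀,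
      pderivRR m r t + ((d:ℝ)+1)/r * pderivR m r t + r * V r t * pderivR m r t
        + (d:ℝ) * V r t * m r t + c r t * w r t ≤ pderivT m r t)
    (hpde2 : ∀ r ∈ Set.Ioi (0:ℝ), ∀ t ∈ Set.Ioc (0:ℝ) T₀,
      pderivRR w r t + ((d:ℝ)+1)/r * pderivR w r t + m r t ≤ pderivT w r t)
    (hinit : ∀ r ∈ Set.Ioi (0:ℝ), 0 ≤ m r 0 ∧ 0 ≤ w r 0) :
    ∀ r ∈ Set.Ioi (0:ℝ), ∀ t ∈ Set.Icc (0:ℝ) T₀, 0 ≤ m r t ∧ 0 ≤ w r t := by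
  have hBm : 0 ≤ Bm := le_trans (abs_nonneg _)
    (hbm 1 (by norm_num) 0 ⟨le_refl _, hT₀.le⟩).1
  set D : ℝ := (d : ℝ) with hDdef
  have hD : 1 ≤ D := by rw [hDdef]; exact_mod_cast hd
  set lam : ℝ := 2*D+6 + B*(D+2) + C₁ with hlamdef
  have hlam0 : 0 ≤ lam := by nlinarith
  have hlam5 : 2*D+5 ≤ lam := by nlinarith
  -- main claim with the barrier
  have main : ∀ ε > (0:ℝ), ∀ η > (0:ℝ), ∀ r ∈ Set.Ioi (0:ℝ), ∀ t ∈ Set.Icc (0:ℝ) T₀,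
      0 ≤ m r t + Real.exp (lam*t) * (ε*(1+r^2) + η*r^(-D)) ∧
      0 ≤ w r t + Real.exp (lam*t) * (ε*(1+r^2) + η*r^(-D)) := by
    intro ε hε η hη
    have hψpos : ∀ r : ℝ, 0 < r → ∀ t : ℝ,
        0 < Real.exp (lam*t) * (ε*(1+r^2) + η*r^(-D)) := by
      intro r hr t
      apply mul_pos (Real.exp_pos _)
      have := Real.rpow_pos_of_pos hr (-D)
      nlinarith [sq_nonneg r]
    -- small-radius positivity
    set δ : ℝ := min 1 (η/(Bm+1)) with hδdef
    have hδ0 : 0 < δ := lt_min one_pos (div_pos hη (by linarith))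
    have hδ1 : δ ≤ 1 := min_le_left _ _
    have hsmall : ∀ r : ℝ, 0 < r → r ≤ δ → ∀ t ∈ Set.Icc (0:ℝ) T₀,
        Bm < Real.exp (lam*t) * (ε*(1+r^2) + η*r^(-D)) := by
      intro r hr hrδ t ht
      have e1 : (1:ℝ) ≤ Real.exp (lam*t) := Real.one_le_exp (mul_nonneg hlam0 ht.1)
      have e2 : r^(-(1:ℝ)) ≤ r^(-D) :=
        Real.rpow_le_rpow_of_exponent_ge hr (le_trans hrδ hδ1) (by linarith)
      have e3 : r^(-(1:ℝ)) = 1/r := by rw [Real.rpow_neg_one]; exact (one_div r).symm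
      have e4 : r*(Bm+1) ≤ η := by
        have h' : r ≤ η/(Bm+1) := le_trans hrδ (min_le_right _ _)
        rw [le_div_iff₀ (by linarith : (0:ℝ) < Bm+1)] at h'
        linarith
      have e5 : Bm + 1 ≤ η * (1/r) := by
        rw [mul_one_div, le_div_iff₀ hr]
        linarith
      have e6 : η * r^(-(1:ℝ)) ≤ η * r^(-D) := mul_le_mul_of_nonneg_left e2 hη.le
      rw [e3] at e6
      have e7 : Bm + 1 ≤ ε*(1+r^2) + η*r^(-D) := by nlinarith [sq_nonneg r]
      calc Bm < Bm + 1 := by linarith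
        _ ≤ ε*(1+r^2) + η*r^(-D) := e7
        _ ≤ Real.exp (lam*t) * (ε*(1+r^2) + η*r^(-D)) :=
            le_mul_of_one_le_left (by linarith) e1
    -- large-radius positivity
    set R : ℝ := max (δ+1) (Real.sqrt (Bm/ε) + 1) with hRdef
    have hδR : δ < R := lt_of_lt_of_le (lt_add_one δ) (le_max_left _ _)
    have hR0 : 0 < R := lt_trans hδ0 hδR
    have hlarge : ∀ r : ℝ, R ≤ r → ∀ t ∈ Set.Icc (0:ℝ) T₀,
        Bm < Real.exp (lam*t) * (ε*(1+r^2) + η*r^(-D)) := by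
      intro r hrR t ht
      have hr0 : 0 < r := lt_of_lt_of_le hR0 hrR
      have e1 : (1:ℝ) ≤ Real.exp (lam*t) := Real.one_le_exp (mul_nonneg hlam0 ht.1)
      have hsq : Real.sqrt (Bm/ε)^2 = Bm/ε := Real.sq_sqrt (div_nonneg hBm hε.le)
      have hs0 : 0 ≤ Real.sqrt (Bm/ε) := Real.sqrt_nonneg _
      have hrs : Real.sqrt (Bm/ε) + 1 ≤ r := le_trans (le_max_right _ _) hrR
      have e2 : (Real.sqrt (Bm/ε) + 1)^2 ≤ r^2 := by nlinarith
      have e3 : Bm/ε + 1 ≤ r^2 := by nlinarith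
      have e4 : Bm ≤ ε * r^2 - ε := by
        have := mul_le_mul_of_nonneg_left e3 hε.le
        rw [mul_add, mul_div_cancel₀ _ (ne_of_gt hε)] at this
        linarith
      have e5 : 0 ≤ η*r^(-D) := mul_nonneg hη.le (Real.rpow_nonneg hr0.le _)
      have e7 : Bm + ε ≤ ε*(1+r^2) + η*r^(-D) := by nlinarith
      calc Bm < Bm + ε := by linarith
        _ ≤ ε*(1+r^2) + η*r^(-D) := e7
        _ ≤ Real.exp (lam*t) * (ε*(1+r^2) + η*r^(-D)) :=
            le_mul_of_one_le_left (by linarith) e1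
    -- reduce to the compact rectangle
    set F : ℝ × ℝ → ℝ := fun p =>
      min (m p.1 p.2 + Real.exp (lam*p.2) * (ε*(1+p.1^2) + η*p.1^(-D)))
          (w p.1 p.2 + Real.exp (lam*p.2) * (ε*(1+p.1^2) + η*p.1^(-D))) with hFdef
    suffices hKey : ∀ p ∈ Set.Icc δ R ×ˢ Set.Icc (0:ℝ) T₀, 0 ≤ F p by
      intro r hr t ht
      rcases le_or_gt δ r with h2 | h2
      · rcases le_or_gt r R with h1 | h1
        · have h0 := hKey (r, t) ⟨⟨h2, h1⟩, ht⟩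
          rw [hFdef] at h0
          simp only [le_min_iff] at h0
          exact h0
        · have h3 := hlarge r h1.le t ht
          have h4 := hbm r hr t ht
          have h5 := abs_le.mp h4.1
          have h6 := abs_le.mp h4.2
          exact ⟨by linarith, by linarith⟩
      · have h3 := hsmall r hr h2.le t ht
        have h4 := hbm r hr t ht
        have h5 := abs_le.mp h4.1
        have h6 := abs_le.mp h4.2
        exact ⟨by linarith, by linarith⟩
    -- by contradiction: first touching point
    by_contra hcon
    push_neg at hcon
    obtain ⟨p0, hp0K, hp0F⟩ := hcon
    have hsubK : Set.Icc δ R ×ˢ Set.Icc (0:ℝ) T₀ ⊆ Set.Ioi 0 ×ˢ Set.Icc (0:ℝ) T₀ := by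
      intro q hq
      exact ⟨lt_of_lt_of_le hδ0 hq.1.1, hq.2⟩
    have hψcont : ContinuousOn (fun p : ℝ × ℝ =>
        Real.exp (lam*p.2) * (ε*(1+p.1^2) + η*p.1^(-D)))
        (Set.Icc δ R ×ˢ Set.Icc (0:ℝ) T₀) := by
      intro p hp
      apply ContinuousAt.continuousWithinAt
      have hp1 : p.1 ≠ 0 := ne_of_gt (lt_of_lt_of_le hδ0 hp.1.1)
      have hrpow : ContinuousAt (fun q : ℝ × ℝ => q.1 ^ (-D)) p :=
        (Real.continuousAt_rpow_const p.1 (-D) (Or.inl hp1)).comp continuousAt_fst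
      have h1 : ContinuousAt (fun q : ℝ × ℝ => Real.exp (lam*q.2)) p :=
        (Real.continuous_exp.comp (continuous_const.mul continuous_snd)).continuousAt
      have h2 : ContinuousAt (fun q : ℝ × ℝ => ε*(1+q.1^2)) p := by fun_prop
      exact h1.mul (h2.add (continuousAt_const.mul hrpow))
    have hFc : ContinuousOn F (Set.Icc δ R ×ˢ Set.Icc (0:ℝ) T₀) := by
      have hA := (hmc.mono hsubK).add hψcont
      have hB' := (hwc.mono hsubK).add hψcont
      intro q hq
      exact (hA q hq).min (hB' q hq)
    have hFinit : ∀ r ∈ Set.Icc δ R, 0 < F (r, 0) := by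
      intro r hr
      have hr0 : 0 < r := lt_of_lt_of_le hδ0 hr.1
      have h1 := hinit r hr0
      have h2 := hψpos r hr0 0
      rw [hFdef]
      simp only [lt_min_iff]
      constructor <;> [linarith [h1.1]; linarith [h1.2]]
    obtain ⟨p, hpK, hpt, hpF, hplater⟩ :=
      first_touch hδR hT₀ hFc hFinit ⟨p0, hp0K, hp0F.le⟩
    have hs0 : 0 < p.1 := lt_of_lt_of_le hδ0 hpK.1.1
    have ht0T : p.2 ∈ Set.Ioc (0:ℝ) T₀ := ⟨hpt, hpK.2.2⟩
    -- global nonnegativity at times ≤ t0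
    have hglob : ∀ x : ℝ, 0 < x → ∀ τ ∈ Set.Icc (0:ℝ) p.2,
        0 ≤ m x τ + Real.exp (lam*τ) * (ε*(1+x^2) + η*x^(-D)) ∧
        0 ≤ w x τ + Real.exp (lam*τ) * (ε*(1+x^2) + η*x^(-D)) := by
      intro x hx τ hτ
      have hτ' : τ ∈ Set.Icc (0:ℝ) T₀ := ⟨hτ.1, le_trans hτ.2 hpK.2.2⟩
      rcases le_or_gt δ x with h2 | h2
      · rcases le_or_gt x R with h1 | h1
        · have h0 := hplater (x, τ) ⟨⟨h2, h1⟩, hτ'⟩ hτ.2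
          rw [hFdef] at h0
          simp only [le_min_iff] at h0
          exact h0
        · have h3 := hlarge x h1.le τ hτ'
          have h4 := hbm x hx τ hτ'
          have h5 := abs_le.mp h4.1
          have h6 := abs_le.mp h4.2
          exact ⟨by linarith, by linarith⟩
      · have h3 := hsmall x hx h2.le τ hτ'
        have h4 := hbm x hx τ hτ'
        have h5 := abs_le.mp h4.1
        have h6 := abs_le.mp h4.2
        exact ⟨by linarith, by linarith⟩
    have hboth := hglob p.1 hs0 p.2 ⟨hpt.le, le_refl _⟩
    -- rpow bookkeeping
    have hP2 : (0:ℝ) < p.1 ^ (-D-2) := Real.rpow_pos_of_pos hs0 _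
    have hP21 : p.1 ^ (-D-1) = p.1 ^ (-D-2) * p.1 := by
      rw [show (-D-1 : ℝ) = (-D-2) + 1 by ring, Real.rpow_add hs0, Real.rpow_one]
    have hP20 : p.1 ^ (-D) = p.1 ^ (-D-2) * p.1^2 := by
      have h := Real.rpow_add hs0 (-D-2) 2
      rw [show (-D-2+2 : ℝ) = -D by ring] at h
      rw [h]
      norm_num
    have hE : (0:ℝ) < Real.exp (lam*p.2) := Real.exp_pos _
    -- min cases
    have hminEq : F p = 0 := hpF
    rw [hFdef] at hminEq
    rcases min_cases (m p.1 p.2 + Real.exp (lam*p.2) * (ε*(1+p.1^2) + η*p.1^(-D)))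
      (w p.1 p.2 + Real.exp (lam*p.2) * (ε*(1+p.1^2) + η*p.1^(-D))) with hA | hA
    · -- m-component touches zero
      have hzero : m p.1 p.2 + Real.exp (lam*p.2) * (ε*(1+p.1^2) + η*p.1^(-D)) = 0 := by
        rw [← hA.1]; exact hminEq
      obtain ⟨hd1, hd2, hd3⟩ := touch_derivs D ε η lam m hs0 hpt
        (hmt p.1 hs0 p.2 ht0T) (fun x hx => hmr x hx p.2 ht0T)
        (hmrr p.1 hs0 p.2 ht0T)
        (fun x hx => by
          rw [hzero]
          exact (hglob x hx p.2 ⟨hpt.le, le_refl _⟩).1)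
        (fun τ hτ => (hglob p.1 hs0 τ hτ).1)
        hzero
      have hpde := hpde1 p.1 hs0 p.2 ht0T
      exact contra_m D ε η (Real.exp (lam*p.2)) p.1 (p.1^(-D-2))
        (pderivR m p.1 p.2) (m p.1 p.2) (pderivRR m p.1 p.2) (pderivT m p.1 p.2)
        (V p.1 p.2) (c p.1 p.2) (w p.1 p.2) B C₁ lam
        (Real.exp (lam*p.2) * (ε*(1+p.1^2) + η*(p.1^(-D-2)*p.1^2)))
        (Real.exp (lam*p.2) * (ε*(2*p.1) + η*(-D*(p.1^(-D-2)*p.1))))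
        (Real.exp (lam*p.2) * (ε*2 + η*(-D * ((-D-1) * p.1^(-D-2)))))
        hD hε hη hE hs0 hP2 rfl rfl rfl hlamdef
        (by rw [← hP21]; exact hd1)
        (by exact hd2)
        (by rw [← hP20]; exact hd3)
        hpde
        (by rw [← hP20]; exact hzero)
        (by rw [← hP20]; exact hboth.2)
        (hVb p.1 hs0 p.2 ht0T) (hcb p.1 hs0 p.2 ht0T).1 (hcb p.1 hs0 p.2 ht0T).2
    · -- w-component touches zero
      have hzero : w p.1 p.2 + Real.exp (lam*p.2) * (ε*(1+p.1^2) + η*p.1^(-D)) = 0 := by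
        rw [← hA.1]; exact hminEq
      obtain ⟨hd1, hd2, hd3⟩ := touch_derivs D ε η lam w hs0 hpt
        (hwt p.1 hs0 p.2 ht0T) (fun x hx => hwr x hx p.2 ht0T)
        (hwrr p.1 hs0 p.2 ht0T)
        (fun x hx => by
          rw [hzero]
          exact (hglob x hx p.2 ⟨hpt.le, le_refl _⟩).2)
        (fun τ hτ => (hglob p.1 hs0 τ hτ).2)
        hzero
      have hpde := hpde2 p.1 hs0 p.2 ht0T
      exact contra_w D ε η (Real.exp (lam*p.2)) p.1 (p.1^(-D-2))
        (pderivR w p.1 p.2) (w p.1 p.2) (pderivRR w p.1 p.2) (pderivT w p.1 p.2)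
        (m p.1 p.2) lam
        (Real.exp (lam*p.2) * (ε*(1+p.1^2) + η*(p.1^(-D-2)*p.1^2)))
        (Real.exp (lam*p.2) * (ε*(2*p.1) + η*(-D*(p.1^(-D-2)*p.1))))
        (Real.exp (lam*p.2) * (ε*2 + η*(-D * ((-D-1) * p.1^(-D-2)))))
        hD hε hη hE hs0 hP2 rfl rfl rfl hlam5
        (by rw [← hP21]; exact hd1)
        (by exact hd2)
        (by rw [← hP20]; exact hd3)
        hpde
        (by rw [← hP20]; exact hzero)
        (by rw [← hP20]; exact hboth.1)
  -- pass to the limit ε, η → 0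
  intro r hr t ht
  have hrpowpos : 0 < r ^ (-D) := Real.rpow_pos_of_pos hr _
  have hexpT : ∀ s ∈ Set.Icc (0:ℝ) T₀, Real.exp (lam*s) ≤ Real.exp (lam*T₀) := by
    intro s hs
    exact Real.exp_le_exp.mpr (mul_le_mul_of_nonneg_left hs.2 hlam0)
  have hET : 0 < Real.exp (lam*T₀) := Real.exp_pos _
  constructor
  · by_contra hneg
    push_neg at hneg
    set q : ℝ := -(m r t) with hqdef
    have hq : 0 < q := by simp only [hqdef]; linarith
    set ε : ℝ := q / (4 * Real.exp (lam*T₀) * (1+r^2)) with hεdef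
    set η : ℝ := q / (4 * Real.exp (lam*T₀) * r^(-D)) with hηdef
    have hε : 0 < ε := by
      apply div_pos hq
      positivity
    have hη : 0 < η := by
      apply div_pos hq
      positivity
    have h0 := (main ε hε η hη r hr t ht).1
    have h1 : ε*(1+r^2) = q / (4 * Real.exp (lam*T₀)) := by
      rw [hεdef]; field_simp
    have h2 : η*r^(-D) = q / (4 * Real.exp (lam*T₀)) := by
      rw [hηdef]; field_simp
    have h3 : Real.exp (lam*t) * (ε*(1+r^2) + η*r^(-D)) ≤ q/2 := by
      rw [h1, h2]
      have := hexpT t ht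
      have hqq : q / (4 * Real.exp (lam*T₀)) + q / (4 * Real.exp (lam*T₀))
          = q / (2 * Real.exp (lam*T₀)) := by field_simp; ring
      calc Real.exp (lam*t) * (q / (4 * Real.exp (lam*T₀)) + q / (4 * Real.exp (lam*T₀)))
          = Real.exp (lam*t) * (q / (2 * Real.exp (lam*T₀))) := by rw [hqq]
        _ ≤ Real.exp (lam*T₀) * (q / (2 * Real.exp (lam*T₀))) := by
            apply mul_le_mul_of_nonneg_right this
            positivity
        _ = q/2 := by field_simp
    simp only [hqdef] at h0 h3
    linarith
  · by_contra hneg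
    push_neg at hneg
    set q : ℝ := -(w r t) with hqdef
    have hq : 0 < q := by simp only [hqdef]; linarith
    set ε : ℝ := q / (4 * Real.exp (lam*T₀) * (1+r^2)) with hεdef
    set η : ℝ := q / (4 * Real.exp (lam*T₀) * r^(-D)) with hηdef
    have hε : 0 < ε := by
      apply div_pos hq
      positivity
    have hη : 0 < η := by
      apply div_pos hq
      positivity
    have h0 := (main ε hε η hη r hr t ht).2
    have h1 : ε*(1+r^2) = q / (4 * Real.exp (lam*T₀)) := by
      rw [hεdef]; field_simp
    have h2 : η*r^(-D) = q / (4 * Real.exp (lam*T₀)) := by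
      rw [hηdef]; field_simp
    have h3 : Real.exp (lam*t) * (ε*(1+r^2) + η*r^(-D)) ≤ q/2 := by
      rw [h1, h2]
      have := hexpT t ht
      have hqq : q / (4 * Real.exp (lam*T₀)) + q / (4 * Real.exp (lam*T₀))
          = q / (2 * Real.exp (lam*T₀)) := by field_simp; ring
      calc Real.exp (lam*t) * (q / (4 * Real.exp (lam*T₀)) + q / (4 * Real.exp (lam*T₀)))
          = Real.exp (lam*t) * (q / (2 * Real.exp (lam*T₀))) := by rw [hqq]
        _ ≤ Real.exp (lam*T₀) * (q / (2 * Real.exp (lam*T₀))) := by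
            apply mul_le_mul_of_nonneg_right this
            positivity
        _ = q/2 := by field_simp
    simp only [hqdef] at h0 h3
    linarith

/-- Assembly: unified treatment of the two flux cases. -/
lemma stmt4aux (d : ℕ) (hd : 1 ≤ d) (T : ℝ) (hT : 0 < T)
    (Ml Mu Wl Wu V cc : ℝ → ℝ → ℝ)
    (hMl : MassReg Ml T) (hMu : MassReg Mu T) (hWl : MassReg Wl T) (hWu : MassReg Wu T)
    (hVb : ∀ T₀, 0 < T₀ → T₀ < T → ∃ B, 0 ≤ B ∧
      ∀ r ∈ Set.Ioi (0:ℝ), ∀ t ∈ Set.Ioc (0:ℝ) T₀, |V r t| ≤ B)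
    (hccb : ∀ T₀, 0 < T₀ → T₀ < T → ∃ C, 0 ≤ C ∧
      ∀ r ∈ Set.Ioi (0:ℝ), ∀ t ∈ Set.Ioc (0:ℝ) T₀, 0 ≤ cc r t ∧ cc r t ≤ C)
    (hdecomp : ∀ r ∈ Set.Ioi (0:ℝ), ∀ t ∈ Set.Ioo (0:ℝ) T,
      r * pderivR Mu r t * Wu r t + (d:ℝ) * Mu r t * Wu r t
        - r * pderivR Ml r t * Wl r t - (d:ℝ) * Ml r t * Wl r t
      = r * (pderivR Mu r t - pderivR Ml r t) * V r t
        + (d:ℝ) * (Mu r t - Ml r t) * V r t + cc r t * (Wu r t - Wl r t))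
    (hineq1 : ∀ r ∈ Set.Ioi (0 : ℝ), ∀ t ∈ Set.Ioo (0 : ℝ) T,
      pderivT Ml r t - pderivRR Ml r t - ((d : ℝ) + 1) / r * pderivR Ml r t
          - r * pderivR Ml r t * Wl r t - (d : ℝ) * Ml r t * Wl r t
        ≤ pderivT Mu r t - pderivRR Mu r t - ((d : ℝ) + 1) / r * pderivR Mu r t
          - r * pderivR Mu r t * Wu r t - (d : ℝ) * Mu r t * Wu r t)
    (hineq2 : ∀ r ∈ Set.Ioi (0 : ℝ), ∀ t ∈ Set.Ioo (0 : ℝ) T,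
      pderivT Wl r t - pderivRR Wl r t - ((d : ℝ) + 1) / r * pderivR Wl r t - Ml r t
        ≤ pderivT Wu r t - pderivRR Wu r t - ((d : ℝ) + 1) / r * pderivR Wu r t - Mu r t)
    (hinit : ∀ r ∈ Set.Ioi (0 : ℝ), Ml r 0 ≤ Mu r 0 ∧ Wl r 0 ≤ Wu r 0) :
    ∀ r ∈ Set.Ioi (0 : ℝ), ∀ t ∈ Set.Ico (0 : ℝ) T, Ml r t ≤ Mu r t ∧ Wl r t ≤ Wu r t := by
  intro r hr t ht
  set T₀ : ℝ := (t + T)/2 with hT₀def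
  have hT₀pos : 0 < T₀ := by simp only [hT₀def]; linarith [ht.1, hT]
  have hT₀T : T₀ < T := by simp only [hT₀def]; linarith [ht.2]
  have htT₀ : t ≤ T₀ := by simp only [hT₀def]; linarith [ht.2]
  have hIoc : Set.Ioc (0:ℝ) T₀ ⊆ Set.Ioo (0:ℝ) T := fun x hx => ⟨hx.1, lt_of_le_of_lt hx.2 hT₀T⟩
  have hsubC : Set.Ioi (0:ℝ) ×ˢ Set.Icc (0:ℝ) T₀ ⊆ Set.Ici 0 ×ˢ Set.Ico 0 T := by
    intro q hq
    exact ⟨Set.mem_Ici.mpr (le_of_lt hq.1), hq.2.1, lt_of_le_of_lt hq.2.2 hT₀T⟩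
  -- bounds
  obtain ⟨CMl, hCMl⟩ := hMl.2.2.2.2.2.2.2 T₀ hT₀T
  obtain ⟨CMu, hCMu⟩ := hMu.2.2.2.2.2.2.2 T₀ hT₀T
  obtain ⟨CWl, hCWl⟩ := hWl.2.2.2.2.2.2.2 T₀ hT₀T
  obtain ⟨CWu, hCWu⟩ := hWu.2.2.2.2.2.2.2 T₀ hT₀T
  obtain ⟨B, hB0, hBb⟩ := hVb T₀ hT₀pos hT₀T
  obtain ⟨C₁, hC0, hCb⟩ := hccb T₀ hT₀pos hT₀T
  set Bm : ℝ := CMl + CMu + CWl + CWu with hBmdef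
  -- linearity facts
  have hdT : ∀ x ∈ Set.Ioi (0:ℝ), ∀ s ∈ Set.Ioo (0:ℝ) T,
      pderivT (fun a b => Mu a b - Ml a b) x s = pderivT Mu x s - pderivT Ml x s :=
    fun x hx s hs => deriv_fun_sub (hMu.2.1 x (Set.mem_Ici.mpr (le_of_lt hx)) s hs) (hMl.2.1 x (Set.mem_Ici.mpr (le_of_lt hx)) s hs)
  have hdTw : ∀ x ∈ Set.Ioi (0:ℝ), ∀ s ∈ Set.Ioo (0:ℝ) T,
      pderivT (fun a b => Wu a b - Wl a b) x s = pderivT Wu x s - pderivT Wl x s :=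
    fun x hx s hs => deriv_fun_sub (hWu.2.1 x (Set.mem_Ici.mpr (le_of_lt hx)) s hs) (hWl.2.1 x (Set.mem_Ici.mpr (le_of_lt hx)) s hs)
  have hdR : ∀ x ∈ Set.Ioi (0:ℝ), ∀ s ∈ Set.Ioo (0:ℝ) T,
      pderivR (fun a b => Mu a b - Ml a b) x s = pderivR Mu x s - pderivR Ml x s :=
    fun x hx s hs => deriv_fun_sub (hMu.2.2.1 x (Set.mem_Ici.mpr (le_of_lt hx)) s hs) (hMl.2.2.1 x (Set.mem_Ici.mpr (le_of_lt hx)) s hs)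
  have hdRw : ∀ x ∈ Set.Ioi (0:ℝ), ∀ s ∈ Set.Ioo (0:ℝ) T,
      pderivR (fun a b => Wu a b - Wl a b) x s = pderivR Wu x s - pderivR Wl x s :=
    fun x hx s hs => deriv_fun_sub (hWu.2.2.1 x (Set.mem_Ici.mpr (le_of_lt hx)) s hs) (hWl.2.2.1 x (Set.mem_Ici.mpr (le_of_lt hx)) s hs)
  have hEqR : ∀ x ∈ Set.Ioi (0:ℝ), ∀ s ∈ Set.Ioo (0:ℝ) T,
      (fun ρ => deriv (fun ρ' => Mu ρ' s - Ml ρ' s) ρ) =ᶠ[nhds x]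
      (fun ρ => pderivR Mu ρ s - pderivR Ml ρ s) := by
    intro x hx s hs
    filter_upwards [isOpen_Ioi.mem_nhds hx] with y hy
    exact deriv_fun_sub (hMu.2.2.1 y (Set.mem_Ici.mpr (le_of_lt hy)) s hs) (hMl.2.2.1 y (Set.mem_Ici.mpr (le_of_lt hy)) s hs)
  have hEqRw : ∀ x ∈ Set.Ioi (0:ℝ), ∀ s ∈ Set.Ioo (0:ℝ) T,
      (fun ρ => deriv (fun ρ' => Wu ρ' s - Wl ρ' s) ρ) =ᶠ[nhds x]
      (fun ρ => pderivR Wu ρ s - pderivR Wl ρ s) := by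
    intro x hx s hs
    filter_upwards [isOpen_Ioi.mem_nhds hx] with y hy
    exact deriv_fun_sub (hWu.2.2.1 y (Set.mem_Ici.mpr (le_of_lt hy)) s hs) (hWl.2.2.1 y (Set.mem_Ici.mpr (le_of_lt hy)) s hs)
  have hdRRdiff : ∀ x ∈ Set.Ioi (0:ℝ), ∀ s ∈ Set.Ioo (0:ℝ) T,
      DifferentiableAt ℝ (fun ρ => deriv (fun ρ' => Mu ρ' s - Ml ρ' s) ρ) x := by
    intro x hx s hs
    exact ((hMu.2.2.2.2.2.1 x hx s hs).sub
      (hMl.2.2.2.2.2.1 x hx s hs)).congr_of_eventuallyEq (hEqR x hx s hs)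
  have hdRRdiffw : ∀ x ∈ Set.Ioi (0:ℝ), ∀ s ∈ Set.Ioo (0:ℝ) T,
      DifferentiableAt ℝ (fun ρ => deriv (fun ρ' => Wu ρ' s - Wl ρ' s) ρ) x := by
    intro x hx s hs
    exact ((hWu.2.2.2.2.2.1 x hx s hs).sub
      (hWl.2.2.2.2.2.1 x hx s hs)).congr_of_eventuallyEq (hEqRw x hx s hs)
  have hdRR : ∀ x ∈ Set.Ioi (0:ℝ), ∀ s ∈ Set.Ioo (0:ℝ) T,
      pderivRR (fun a b => Mu a b - Ml a b) x s = pderivRR Mu x s - pderivRR Ml x s := by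
    intro x hx s hs
    have h1 : pderivRR (fun a b => Mu a b - Ml a b) x s
        = deriv (fun ρ => pderivR Mu ρ s - pderivR Ml ρ s) x := (hEqR x hx s hs).deriv_eq
    rw [h1]
    exact deriv_fun_sub (hMu.2.2.2.2.2.1 x hx s hs) (hMl.2.2.2.2.2.1 x hx s hs)
  have hdRRw : ∀ x ∈ Set.Ioi (0:ℝ), ∀ s ∈ Set.Ioo (0:ℝ) T,
      pderivRR (fun a b => Wu a b - Wl a b) x s = pderivRR Wu x s - pderivRR Wl x s := by
    intro x hx s hs
    have h1 : pderivRR (fun a b => Wu a b - Wl a b) x s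
        = deriv (fun ρ => pderivR Wu ρ s - pderivR Wl ρ s) x := (hEqRw x hx s hs).deriv_eq
    rw [h1]
    exact deriv_fun_sub (hWu.2.2.2.2.2.1 x hx s hs) (hWl.2.2.2.2.2.1 x hx s hs)
  -- apply key
  have hres := key d hd hT₀pos
    (fun a b => Mu a b - Ml a b) (fun a b => Wu a b - Wl a b) V cc Bm B C₁ hB0 hC0
    -- continuity
    (((hMu.1.mono hsubC).sub (hMl.1.mono hsubC)))
    (((hWu.1.mono hsubC).sub (hWl.1.mono hsubC)))
    (fun x hx s hs => (hMu.2.1 x (Set.mem_Ici.mpr (le_of_lt hx)) s (hIoc hs)).sub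
      (hMl.2.1 x (Set.mem_Ici.mpr (le_of_lt hx)) s (hIoc hs)))
    (fun x hx s hs => (hWu.2.1 x (Set.mem_Ici.mpr (le_of_lt hx)) s (hIoc hs)).sub
      (hWl.2.1 x (Set.mem_Ici.mpr (le_of_lt hx)) s (hIoc hs)))
    (fun x hx s hs => (hMu.2.2.1 x (Set.mem_Ici.mpr (le_of_lt hx)) s (hIoc hs)).sub
      (hMl.2.2.1 x (Set.mem_Ici.mpr (le_of_lt hx)) s (hIoc hs)))
    (fun x hx s hs => (hWu.2.2.1 x (Set.mem_Ici.mpr (le_of_lt hx)) s (hIoc hs)).sub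
      (hWl.2.2.1 x (Set.mem_Ici.mpr (le_of_lt hx)) s (hIoc hs)))
    (fun x hx s hs => hdRRdiff x hx s (hIoc hs))
    (fun x hx s hs => hdRRdiffw x hx s (hIoc hs))
    -- boundedness
    (by
      intro x hx s hs
      have h1 := hCMl x (Set.mem_Ici.mpr (le_of_lt hx)) s hs
      have h2 := hCMu x (Set.mem_Ici.mpr (le_of_lt hx)) s hs
      have h3 := hCWl x (Set.mem_Ici.mpr (le_of_lt hx)) s hs
      have h4 := hCWu x (Set.mem_Ici.mpr (le_of_lt hx)) s hs
      have e3 := abs_nonneg (Ml x s)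
      have e4 := abs_nonneg (Mu x s)
      have e5 := abs_nonneg (Wl x s)
      have e6 := abs_nonneg (Wu x s)
      constructor
      · calc |Mu x s - Ml x s| ≤ |Mu x s| + |Ml x s| := abs_sub _ _
          _ ≤ Bm := by rw [hBmdef]; linarith
      · calc |Wu x s - Wl x s| ≤ |Wu x s| + |Wl x s| := abs_sub _ _
          _ ≤ Bm := by rw [hBmdef]; linarith)
    hBb hCb
    -- PDE 1
    (by
      intro x hx s hs
      have h1 := hineq1 x hx s (hIoc hs)
      have h2 := hdecomp x hx s (hIoc hs)
      have e1 := hdT x hx s (hIoc hs)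
      have e2 := hdR x hx s (hIoc hs)
      have e3 := hdRR x hx s (hIoc hs)
      rw [e1, e2, e3]
      linarith [h1, h2])
    -- PDE 2
    (by
      intro x hx s hs
      have h1 := hineq2 x hx s (hIoc hs)
      have e1 := hdTw x hx s (hIoc hs)
      have e2 := hdRw x hx s (hIoc hs)
      have e3 := hdRRw x hx s (hIoc hs)
      rw [e1, e2, e3]
      linarith [h1])
    -- init
    (fun x hx => ⟨sub_nonneg.mpr (hinit x hx).1, sub_nonneg.mpr (hinit x hx).2⟩)
  have := hres r hr t ⟨ht.1, htT₀⟩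
  exact ⟨sub_nonneg.mp this.1, sub_nonneg.mp this.2⟩

end ComparisonHelpers

/-- Comparison principle for the mass-function system on `(0,∞)`. -/
theorem stmt4 (d : ℕ) (hd : 1 ≤ d) (T : ℝ) (hT : 0 < T)
    (Ml Mu Wl Wu : ℝ → ℝ → ℝ)
    (hMl : MassReg Ml T) (hMu : MassReg Mu T) (hWl : MassReg Wl T) (hWu : MassReg Wu T)
    (hflux :
      ((∀ r ∈ Set.Ioi (0 : ℝ), ∀ t ∈ Set.Ioo (0 : ℝ) T,
          0 ≤ r * pderivR Ml r t + (d : ℝ) * Ml r t) ∧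
        (∀ T₀ < T, ∃ Cb : ℝ, ∀ r ∈ Set.Ioi (0 : ℝ), ∀ t ∈ Set.Ioo (0 : ℝ) T₀,
          |r * pderivR Ml r t| ≤ Cb)) ∨
      ((∀ r ∈ Set.Ioi (0 : ℝ), ∀ t ∈ Set.Ioo (0 : ℝ) T,
          0 ≤ r * pderivR Mu r t + (d : ℝ) * Mu r t) ∧
        (∀ T₀ < T, ∃ Cb : ℝ, ∀ r ∈ Set.Ioi (0 : ℝ), ∀ t ∈ Set.Ioo (0 : ℝ) T₀,
          |r * pderivR Mu r t| ≤ Cb)))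
    (hineq1 : ∀ r ∈ Set.Ioi (0 : ℝ), ∀ t ∈ Set.Ioo (0 : ℝ) T,
      pderivT Ml r t - pderivRR Ml r t - ((d : ℝ) + 1) / r * pderivR Ml r t
          - r * pderivR Ml r t * Wl r t - (d : ℝ) * Ml r t * Wl r t
        ≤ pderivT Mu r t - pderivRR Mu r t - ((d : ℝ) + 1) / r * pderivR Mu r t
          - r * pderivR Mu r t * Wu r t - (d : ℝ) * Mu r t * Wu r t)
    (hineq2 : ∀ r ∈ Set.Ioi (0 : ℝ), ∀ t ∈ Set.Ioo (0 : ℝ) T,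
      pderivT Wl r t - pderivRR Wl r t - ((d : ℝ) + 1) / r * pderivR Wl r t - Ml r t
        ≤ pderivT Wu r t - pderivRR Wu r t - ((d : ℝ) + 1) / r * pderivR Wu r t - Mu r t)
    (hinit : ∀ r ∈ Set.Ioi (0 : ℝ), Ml r 0 ≤ Mu r 0 ∧ Wl r 0 ≤ Wu r 0) :
    ∀ r ∈ Set.Ioi (0 : ℝ), ∀ t ∈ Set.Ico (0 : ℝ) T, Ml r t ≤ Mu r t ∧ Wl r t ≤ Wu r t := by
  have hd0 : (0:ℝ) ≤ (d:ℝ) := Nat.cast_nonneg d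
  rcases hflux with ⟨hpos, hbnd⟩ | ⟨hpos, hbnd⟩
  · -- lower flux case: V = Wu, cc = r Ml_r + d Ml
    apply stmt4aux d hd T hT Ml Mu Wl Wu Wu
      (fun r t => r * pderivR Ml r t + (d:ℝ) * Ml r t) hMl hMu hWl hWu
    · -- hVb
      intro T₀ hT₀pos hT₀T
      obtain ⟨CWu, hCWu⟩ := hWu.2.2.2.2.2.2.2 T₀ hT₀T
      refine ⟨CWu, le_trans (abs_nonneg _)
        (hCWu 0 Set.self_mem_Ici 0 ⟨le_refl _, hT₀pos.le⟩), ?_⟩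
      intro r hr t htmem
      exact hCWu r (Set.mem_Ici.mpr hr.le) t ⟨htmem.1.le, htmem.2⟩
    · -- hccb
      intro T₀ hT₀pos hT₀T
      set T₁ : ℝ := (T₀ + T)/2 with hT₁def
      have hT₁a : T₀ < T₁ := by simp only [hT₁def]; linarith
      have hT₁b : T₁ < T := by simp only [hT₁def]; linarith
      obtain ⟨Cb, hCb⟩ := hbnd T₁ hT₁b
      obtain ⟨CMl, hCMl⟩ := hMl.2.2.2.2.2.2.2 T₀ hT₀T
      have hCb0 : 0 ≤ Cb := le_trans (abs_nonneg _)
        (hCb 1 (by norm_num) (T₀/2) ⟨by linarith, by linarith⟩)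
      have hCMl0 : 0 ≤ CMl := le_trans (abs_nonneg _)
        (hCMl 0 Set.self_mem_Ici 0 ⟨le_refl _, hT₀pos.le⟩)
      refine ⟨Cb + (d:ℝ)*CMl, by positivity, ?_⟩
      intro r hr t htmem
      have ht' : t ∈ Set.Ioo (0:ℝ) T := ⟨htmem.1, lt_of_le_of_lt htmem.2 hT₀T⟩
      constructor
      · exact hpos r hr t ht'
      · have h1 := hCb r hr t ⟨htmem.1, lt_of_le_of_lt htmem.2 hT₁a⟩
        have h2 := hCMl r (Set.mem_Ici.mpr hr.le) t ⟨htmem.1.le, htmem.2⟩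
        have h3 := le_abs_self (r * pderivR Ml r t)
        have h4 := le_abs_self (Ml r t)
        have h5 : (d:ℝ) * Ml r t ≤ (d:ℝ) * |Ml r t| := mul_le_mul_of_nonneg_left h4 hd0
        have h6 : (d:ℝ) * |Ml r t| ≤ (d:ℝ) * CMl := mul_le_mul_of_nonneg_left h2 hd0
        linarith
    · -- hdecomp
      intro r hr t ht
      ring
    · exact hineq1
    · exact hineq2
    · exact hinit
  · -- upper flux case: V = Wl, cc = r Mu_r + d Mu
    apply stmt4aux d hd T hT Ml Mu Wl Wu Wl
      (fun r t => r * pderivR Mu r t + (d:ℝ) * Mu r t) hMl hMu hWl hWu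
    · intro T₀ hT₀pos hT₀T
      obtain ⟨CWl, hCWl⟩ := hWl.2.2.2.2.2.2.2 T₀ hT₀T
      refine ⟨CWl, le_trans (abs_nonneg _)
        (hCWl 0 Set.self_mem_Ici 0 ⟨le_refl _, hT₀pos.le⟩), ?_⟩
      intro r hr t htmem
      exact hCWl r (Set.mem_Ici.mpr hr.le) t ⟨htmem.1.le, htmem.2⟩
    · intro T₀ hT₀pos hT₀T
      set T₁ : ℝ := (T₀ + T)/2 with hT₁def
      have hT₁a : T₀ < T₁ := by simp only [hT₁def]; linarith
      have hT₁b : T₁ < T := by simp only [hT₁def]; linarith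
      obtain ⟨Cb, hCb⟩ := hbnd T₁ hT₁b
      obtain ⟨CMu, hCMu⟩ := hMu.2.2.2.2.2.2.2 T₀ hT₀T
      have hCb0 : 0 ≤ Cb := le_trans (abs_nonneg _)
        (hCb 1 (by norm_num) (T₀/2) ⟨by linarith, by linarith⟩)
      have hCMu0 : 0 ≤ CMu := le_trans (abs_nonneg _)
        (hCMu 0 Set.self_mem_Ici 0 ⟨le_refl _, hT₀pos.le⟩)
      refine ⟨Cb + (d:ℝ)*CMu, by positivity, ?_⟩
      intro r hr t htmem
      have ht' : t ∈ Set.Ioo (0:ℝ) T := ⟨htmem.1, lt_of_le_of_lt htmem.2 hT₀T⟩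
      constructor
      · exact hpos r hr t ht'
      · have h1 := hCb r hr t ⟨htmem.1, lt_of_le_of_lt htmem.2 hT₁a⟩
        have h2 := hCMu r (Set.mem_Ici.mpr hr.le) t ⟨htmem.1.le, htmem.2⟩
        have h3 := le_abs_self (r * pderivR Mu r t)
        have h4 := le_abs_self (Mu r t)
        have h5 : (d:ℝ) * Mu r t ≤ (d:ℝ) * |Mu r t| := mul_le_mul_of_nonneg_left h4 hd0
        have h6 : (d:ℝ) * |Mu r t| ≤ (d:ℝ) * CMu := mul_le_mul_of_nonneg_left h2 hd0
        linarith
    · intro r hr t ht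
      ring
    · exact hineq1
    · exact hineq2
    · exact hinit
end

section
/- (Comparison principle for the mass-function system, bounded interval case.) Let d ≥ 1 be an integer, T > 0 and 0 < R < ∞. Let M̲, M̄, W̲, W̄ : [0,R]×[0,T) → ℝ be continuous, continuously differentiable on [0,R]×(0,T), twice continuously differentiable in r on (0,R)×(0,T), and bounded on [0,R]×[0,T₀] for every T₀ < T. Assume that either (r·∂_r M̲ + d·M̲ ≥ 0 on (0,R)×(0,T) and sup_{(r,t)∈(0,R)×(0,T₀)} |r·∂_r M̲(r,t)| < ∞ for every T₀ < T) or (r·∂_r M̄ + d·M̄ ≥ 0 on (0,R)×(0,T) and sup_{(r,t)∈(0,R)×(0,T₀)} |r·∂_r M̄(r,t)| < ∞ for every T₀ < T). Assume that for all (r,t) ∈ (0,R)×(0,T): ∂_t M̲ − ∂_{rr} M̲ − ((d+1)/r)∂_r M̲ − r·(∂_r M̲)·W̲ − d·M̲·W̲ ≤ ∂_t M̄ − ∂_{rr} M̄ − ((d+1)/r)∂_r M̄ − r·(∂_r M̄)·W̄ − d·M̄·W̄, and ∂_t W̲ − ∂_{rr} W̲ − ((d+1)/r)∂_r W̲ −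 M̲ ≤ ∂_t W̄ − ∂_{rr} W̄ − ((d+1)/r)∂_r W̄ − M̄. If M̲(r,0) ≤ M̄(r,0) and W̲(r,0) ≤ W̄(r,0) for all r ∈ (0,R), and M̲(R,t) ≤ M̄(R,t) and W̲(R,t) ≤ W̄(R,t) for all t ∈ (0,T), then M̲ ≤ M̄ and W̲ ≤ W̄ on (0,R)×[0,T). -/
open Set Filter Topology


/-- Regularity for the mass functions on the bounded interval `[0,R]`: continuous on
`[0,R] × [0,T)`, continuously differentiable on `[0,R] × (0,T)`, twice continuously
differentiable in `r` on `(0,R) × (0,T)`, bounded on `[0,R] × [0,T₀]` for every `T₀ < T`. -/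
def MassRegI (f : ℝ → ℝ → ℝ) (R T : ℝ) : Prop :=
  ContinuousOn (fun p : ℝ × ℝ => f p.1 p.2) (Set.Icc 0 R ×ˢ Set.Ico 0 T) ∧
  (∀ r ∈ Set.Icc (0 : ℝ) R, ∀ t ∈ Set.Ioo (0 : ℝ) T, DifferentiableAt ℝ (fun s => f r s) t) ∧
  (∀ r ∈ Set.Icc (0 : ℝ) R, ∀ t ∈ Set.Ioo (0 : ℝ) T, DifferentiableAt ℝ (fun ρ => f ρ t) r) ∧
  ContinuousOn (fun p : ℝ × ℝ => pderivT f p.1 p.2) (Set.Icc 0 R ×ˢ Set.Ioo 0 T) ∧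
  ContinuousOn (fun p : ℝ × ℝ => pderivR f p.1 p.2) (Set.Icc 0 R ×ˢ Set.Ioo 0 T) ∧
  (∀ r ∈ Set.Ioo (0 : ℝ) R, ∀ t ∈ Set.Ioo (0 : ℝ) T,
    DifferentiableAt ℝ (fun ρ => pderivR f ρ t) r) ∧
  ContinuousOn (fun p : ℝ × ℝ => pderivRR f p.1 p.2) (Set.Ioo 0 R ×ˢ Set.Ioo 0 T) ∧
  (∀ T₀ < T, ∃ Cb : ℝ, ∀ r ∈ Set.Icc (0 : ℝ) R, ∀ t ∈ Set.Icc 0 T₀, |f r t| ≤ Cb)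


lemma aux_deriv_nonpos_left (f : ℝ → ℝ) (t₀ : ℝ) (ht₀ : 0 < t₀)
    (hf : DifferentiableAt ℝ f t₀) (h : ∀ t ∈ Set.Icc 0 t₀, f t₀ ≤ f t) :
    deriv f t₀ ≤ 0 := by
  have hs := hasDerivAt_iff_tendsto_slope.mp hf.hasDerivAt
  have hs' : Tendsto (slope f t₀) (𝓝[<] t₀) (𝓝 (deriv f t₀)) :=
    hs.mono_left (nhdsWithin_mono _ (fun x hx => ne_of_lt hx))
  refine le_of_tendsto hs' ?_
  filter_upwards [Ioo_mem_nhdsLT ht₀] with x hx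
  have h1 : 0 ≤ f x - f t₀ := sub_nonneg.mpr (h x ⟨hx.1.le, hx.2.le⟩)
  have h2 : x - t₀ ≤ 0 := (sub_neg.mpr hx.2).le
  rw [slope_def_field]
  exact div_nonpos_of_nonneg_of_nonpos h1 h2

lemma aux_second_deriv_nonneg (f : ℝ → ℝ) (r₀ a b : ℝ) (hab : r₀ ∈ Set.Ioo a b)
    (hdiff : ∀ x ∈ Set.Ioo a b, DifferentiableAt ℝ f x)
    (hdiff2 : DifferentiableAt ℝ (deriv f) r₀)
    (hmin : ∀ x ∈ Set.Ioo a b, f r₀ ≤ f x) :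
    0 ≤ deriv (deriv f) r₀ := by
  have hlm : IsLocalMin f r₀ := by
    filter_upwards [Ioo_mem_nhds hab.1 hab.2] with x hx using hmin x hx
  have hd0 : deriv f r₀ = 0 := hlm.deriv_eq_zero
  by_contra hneg
  push_neg at hneg
  have hs := hasDerivAt_iff_tendsto_slope.mp hdiff2.hasDerivAt
  have hs' : Tendsto (slope (deriv f) r₀) (𝓝[>] r₀) (𝓝 (deriv (deriv f) r₀)) :=
    hs.mono_left (nhdsWithin_mono _ (fun x hx => ne_of_gt hx))
  have hev : ∀ᶠ x in 𝓝[>] r₀, slope (deriv f) r₀ x < 0 :=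
    hs'.eventually_lt_const hneg
  have hev2 : ∀ᶠ x in 𝓝[>] r₀, deriv f x < 0 := by
    filter_upwards [hev, self_mem_nhdsWithin] with x hx hx'
    rw [slope_def_field, hd0, sub_zero] at hx
    have hxr : 0 < x - r₀ := sub_pos.mpr hx'
    by_contra hc
    push_neg at hc
    exact absurd hx (not_lt.mpr (div_nonneg hc hxr.le))
  obtain ⟨u, hu, hsub⟩ := mem_nhdsGT_iff_exists_Ioo_subset.mp hev2
  set c := min u ((r₀ + b)/2) with hc
  have hrc : r₀ < c := lt_min hu (by linarith [hab.2])
  have hcb : c < b := lt_of_le_of_lt (min_le_right _ _) (by linarith [hab.1, hab.2])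
  have hcu : c ≤ u := min_le_left _ _
  have hIcc : Set.Icc r₀ c ⊆ Set.Ioo a b := fun x hx =>
    ⟨lt_of_lt_of_le hab.1 hx.1, lt_of_le_of_lt hx.2 hcb⟩
  have hanti : StrictAntiOn f (Set.Icc r₀ c) := by
    refine strictAntiOn_of_deriv_neg (convex_Icc _ _) ?_ ?_
    · exact fun x hx => (hdiff x (hIcc hx)).continuousAt.continuousWithinAt
    · intro x hx
      rw [interior_Icc] at hx
      exact hsub ⟨hx.1, lt_of_lt_of_le hx.2 hcu⟩
  have := hanti (Set.left_mem_Icc.mpr hrc.le) (Set.right_mem_Icc.mpr hrc.le) hrc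
  exact absurd this (not_lt.mpr (hmin c (hIcc (Set.right_mem_Icc.mpr hrc.le))))

lemma aux_nonneg_of_forall (x A : ℝ) (hA : 0 < A) (h : ∀ ε > (0:ℝ), -(ε*A) ≤ x) : 0 ≤ x := by
  by_contra hc
  push_neg at hc
  have hx' : (0:ℝ) < -x := by linarith
  have hpos : (0:ℝ) < -x/(2*A) := div_pos hx' (by linarith)
  have h2 := h _ hpos
  have key : -x/(2*A)*A = -x/2 := by field_simp
  rw [key] at h2
  linarith

lemma touch (d : ℕ) (hd : 1 ≤ d) (R : ℝ) (p t₀ ε K : ℝ)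
    (hp : p ∈ Set.Ioo (0:ℝ) R) (ht₀ : 0 < t₀)
    (f : ℝ → ℝ → ℝ) (f' : ℝ → ℝ) (f'' ft : ℝ)
    (hdr : ∀ x ∈ Set.Ioo (0:ℝ) R, HasDerivAt (fun ρ => f ρ t₀) (f' x) x)
    (hdr2 : HasDerivAt f' f'' p)
    (hdt : HasDerivAt (fun s => f p s) ft t₀)
    (hzero : p^d * f p t₀ + ε * Real.exp (K * t₀) = 0)
    (hminr : ∀ x ∈ Set.Ioo (0:ℝ) R, 0 ≤ x^d * f x t₀ + ε * Real.exp (K * t₀))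
    (hmint : ∀ s ∈ Set.Icc 0 t₀, 0 ≤ p^d * f p s + ε * Real.exp (K * s)) :
    p * f' p + (d:ℝ) * f p t₀ = 0 ∧
    0 ≤ f'' + ((d:ℝ)+1)/p * f' p ∧
    p^d * ft + ε * (K * Real.exp (K * t₀)) ≤ 0 := by
  obtain ⟨hp0, hpR⟩ := hp
  have hPpos : (0:ℝ) < p^d := pow_pos hp0 d
  have hPne : (p:ℝ)^d ≠ 0 := ne_of_gt hPpos
  have e : p^(d-1) * p = p^d := by
    rw [← pow_succ]; congr 1; omega
  set g : ℝ → ℝ := fun ρ => ρ^d * f ρ t₀ + ε * Real.exp (K * t₀) with hgdef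
  have hg : ∀ x ∈ Set.Ioo (0:ℝ) R,
      HasDerivAt g ((d:ℝ) * x^(d-1) * f x t₀ + x^d * f' x) x := by
    intro x hx
    have h1 := (hasDerivAt_pow d x).mul (hdr x hx)
    exact h1.add_const (ε * Real.exp (K * t₀))
  -- local min of g at p
  have hgp0 : g p = 0 := hzero
  have hlm : IsLocalMin g p := by
    have : ∀ᶠ x in 𝓝 p, g p ≤ g x := by
      filter_upwards [Ioo_mem_nhds hp0 hpR] with x hx
      rw [hgp0]; exact hminr x hx
    exact this
  -- first derivative zero
  have hc1raw : (d:ℝ) * p^(d-1) * f p t₀ + p^d * f' p = 0 := by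
    rw [← (hg p ⟨hp0, hpR⟩).deriv]
    exact hlm.deriv_eq_zero
  have c1 : p * f' p + (d:ℝ) * f p t₀ = 0 := by
    have hPz : p^d * (p * f' p + (d:ℝ) * f p t₀) = 0 := by
      linear_combination p * hc1raw - (d:ℝ) * f p t₀ * e
    exact (mul_eq_zero.mp hPz).resolve_left hPne
  -- second derivative
  have hEvEq : deriv g =ᶠ[𝓝 p]
      (fun x => (d:ℝ) * x^(d-1) * f x t₀ + x^d * f' x) := by
    filter_upwards [Ioo_mem_nhds hp0 hpR] with x hx using (hg x hx).deriv
  have hGd : HasDerivAt (fun x => (d:ℝ) * x^(d-1) * f x t₀ + x^d * f' x)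
      (((d:ℝ) * (((d-1:ℕ):ℝ) * p^(d-1-1)) * f p t₀ + (d:ℝ) * p^(d-1) * f' p)
        + (((d:ℕ):ℝ) * p^(d-1) * f' p + p^d * f'')) p := by
    have ha : HasDerivAt (fun x : ℝ => (d:ℝ) * x^(d-1))
        ((d:ℝ) * (((d-1:ℕ):ℝ) * p^(d-1-1))) p := (hasDerivAt_pow (d-1) p).const_mul (d:ℝ)
    have hb := hdr p ⟨hp0, hpR⟩
    have h1 := ha.mul hb
    have h2 := (hasDerivAt_pow d p).mul hdr2
    exact h1.add h2
  have hsec : 0 ≤ ((d:ℝ) * (((d-1:ℕ):ℝ) * p^(d-1-1)) * f p t₀ + (d:ℝ) * p^(d-1) * f' p)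
        + (((d:ℕ):ℝ) * p^(d-1) * f' p + p^d * f'') := by
    have h2nd := aux_second_deriv_nonneg g p 0 R ⟨hp0, hpR⟩
      (fun x hx => (hg x hx).differentiableAt)
      ((hEvEq.differentiableAt_iff).mpr hGd.differentiableAt)
      (fun x hx => by rw [hgp0]; exact hminr x hx)
    rwa [hEvEq.deriv_eq, hGd.deriv] at h2nd
  have c2 : 0 ≤ f'' + ((d:ℝ)+1)/p * f' p := by
    have hS : 0 ≤ p^2 * f'' + ((d:ℝ)+1) * (p * f' p) := by
      rcases d with _ | _ | m
      · omega
      · -- d = 1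
        norm_num at hsec c1 ⊢
        nlinarith [hsec, c1, hp0]
      · -- d = m + 2
        simp only [Nat.add_sub_cancel] at hsec
        have hZ : 0 ≤ p^m * (((m:ℝ)+2) * ((m:ℝ)+1) * f p t₀
              + 2*((m:ℝ)+2) * (p * f' p) + p^2 * f'') := by
          have heq2 : p^m * (((m:ℝ)+2) * ((m:ℝ)+1) * f p t₀
              + 2*((m:ℝ)+2) * (p * f' p) + p^2 * f'')
            = ((m+1+1:ℕ):ℝ) * (((m+1:ℕ):ℝ) * p^m) * f p t₀
              + ((m+1+1:ℕ):ℝ) * p^(m+1) * f' p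
              + (((m+1+1:ℕ):ℝ) * p^(m+1) * f' p + p^(m+1+1) * f'') := by
            push_cast
            ring
          rw [heq2]
          exact hsec
        have hZ' := (mul_nonneg_iff_of_pos_left (pow_pos hp0 m)).mp hZ
        have c1' : p * f' p + ((m:ℝ)+2) * f p t₀ = 0 := by push_cast at c1 ⊢; linarith
        push_cast
        nlinarith [hZ', c1']
    have heq : f'' + ((d:ℝ)+1)/p * f' p
        = (p^2 * f'' + ((d:ℝ)+1) * (p * f' p)) / p^2 := by
      field_simp
    rw [heq]
    positivity
  -- time derivative
  have hht : HasDerivAt (fun s => p^d * f p s + ε * Real.exp (K * s))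
      (p^d * ft + ε * (K * Real.exp (K * t₀))) t₀ := by
    have h1 := hdt.const_mul (p^d)
    have h2 : HasDerivAt (fun s : ℝ => Real.exp (K * s)) (K * Real.exp (K * t₀)) t₀ := by
      have := (Real.hasDerivAt_exp (K * t₀)).comp t₀ ((hasDerivAt_id t₀).const_mul K)
      rw [show K * Real.exp (K * t₀) = Real.exp (K * t₀) * (K * 1) by ring]
      exact this
    have h3 := h2.const_mul ε
    exact h1.add h3
  have c3 : p^d * ft + ε * (K * Real.exp (K * t₀)) ≤ 0 := by
    rw [← hht.deriv]
    refine aux_deriv_nonpos_left _ t₀ ht₀ hht.differentiableAt ?_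
    intro s hs
    have : p ^ d * f p t₀ + ε * Real.exp (K * t₀) = 0 := hzero
    rw [this]
    exact hmint s hs
  exact ⟨c1, c2, c3⟩

set_option maxHeartbeats 1600000 in
/-- Comparison principle for the mass-function system on a
bounded interval `(0,R)`, with a boundary condition at `r = R`. -/
theorem stmt5 (d : ℕ) (hd : 1 ≤ d) (T : ℝ) (hT : 0 < T) (R : ℝ) (hR : 0 < R)
    (Ml Mu Wl Wu : ℝ → ℝ → ℝ)
    (hMl : MassRegI Ml R T) (hMu : MassRegI Mu R T)
    (hWl : MassRegI Wl R T) (hWu : MassRegI Wu R T)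
    (hflux :
      ((∀ r ∈ Set.Ioo (0 : ℝ) R, ∀ t ∈ Set.Ioo (0 : ℝ) T,
          0 ≤ r * pderivR Ml r t + (d : ℝ) * Ml r t) ∧
        (∀ T₀ < T, ∃ Cb : ℝ, ∀ r ∈ Set.Ioo (0 : ℝ) R, ∀ t ∈ Set.Ioo (0 : ℝ) T₀,
          |r * pderivR Ml r t| ≤ Cb)) ∨
      ((∀ r ∈ Set.Ioo (0 : ℝ) R, ∀ t ∈ Set.Ioo (0 : ℝ) T,
          0 ≤ r * pderivR Mu r t + (d : ℝ) * Mu r t) ∧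
        (∀ T₀ < T, ∃ Cb : ℝ, ∀ r ∈ Set.Ioo (0 : ℝ) R, ∀ t ∈ Set.Ioo (0 : ℝ) T₀,
          |r * pderivR Mu r t| ≤ Cb)))
    (hineq1 : ∀ r ∈ Set.Ioo (0 : ℝ) R, ∀ t ∈ Set.Ioo (0 : ℝ) T,
      pderivT Ml r t - pderivRR Ml r t - ((d : ℝ) + 1) / r * pderivR Ml r t
          - r * pderivR Ml r t * Wl r t - (d : ℝ) * Ml r t * Wl r t
        ≤ pderivT Mu r t - pderivRR Mu r t - ((d : ℝ) + 1) / r * pderivR Mu r t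
          - r * pderivR Mu r t * Wu r t - (d : ℝ) * Mu r t * Wu r t)
    (hineq2 : ∀ r ∈ Set.Ioo (0 : ℝ) R, ∀ t ∈ Set.Ioo (0 : ℝ) T,
      pderivT Wl r t - pderivRR Wl r t - ((d : ℝ) + 1) / r * pderivR Wl r t - Ml r t
        ≤ pderivT Wu r t - pderivRR Wu r t - ((d : ℝ) + 1) / r * pderivR Wu r t - Mu r t)
    (hinit : ∀ r ∈ Set.Ioo (0 : ℝ) R, Ml r 0 ≤ Mu r 0 ∧ Wl r 0 ≤ Wu r 0)
    (hbound : ∀ t ∈ Set.Ioo (0 : ℝ) T, Ml R t ≤ Mu R t ∧ Wl R t ≤ Wu R t) :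
    ∀ r ∈ Set.Ioo (0 : ℝ) R, ∀ t ∈ Set.Ico (0 : ℝ) T,
      Ml r t ≤ Mu r t ∧ Wl r t ≤ Wu r t := by
  -- limits of the initial inequalities at r = R
  have hinitR : Ml R 0 ≤ Mu R 0 ∧ Wl R 0 ≤ Wu R 0 := by
    have hne : (𝓝[Set.Ioo (0:ℝ) R] R).NeBot := by
      rw [← mem_closure_iff_nhdsWithin_neBot, closure_Ioo (ne_of_lt hR)]
      exact ⟨le_of_lt hR, le_refl R⟩
    have key : ∀ F : ℝ → ℝ → ℝ, MassRegI F R T →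
        ContinuousWithinAt (fun r => F r 0) (Set.Ioo 0 R) R := by
      intro F hF
      have h1 : ContinuousOn (fun r => F r 0) (Set.Icc 0 R) := by
        refine (hF.1.comp (Continuous.continuousOn (continuous_id.prodMk continuous_const)) ?_)
        intro x hx
        exact ⟨hx, ⟨le_refl 0, hT⟩⟩
      exact (h1 R ⟨le_of_lt hR, le_refl R⟩).mono Set.Ioo_subset_Icc_self
    constructor
    · refine le_of_tendsto_of_tendsto ((key Ml hMl).tendsto) ((key Mu hMu).tendsto) ?_
      filter_upwards [self_mem_nhdsWithin] with x hx using (hinit x hx).1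
    · refine le_of_tendsto_of_tendsto ((key Wl hWl).tendsto) ((key Wu hWu).tendsto) ?_
      filter_upwards [self_mem_nhdsWithin] with x hx using (hinit x hx).2
  -- main claim
  have main : ∀ T₀, 0 < T₀ → T₀ < T → ∃ K : ℝ, ∀ ε > (0:ℝ),
      ∀ r ∈ Set.Icc (0:ℝ) R, ∀ t ∈ Set.Icc (0:ℝ) T₀,
      0 < r^d * (Mu r t - Ml r t) + ε * Real.exp (K * t) ∧
      0 < r^d * (Wu r t - Wl r t) + ε * Real.exp (K * t) := by
    intro T₀ hT₀0 hT₀T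
    set T₁ := (T₀ + T)/2 with hT₁def
    have hT₀T₁ : T₀ < T₁ := by simp only [hT₁def]; linarith
    have hT₁T : T₁ < T := by simp only [hT₁def]; linarith
    -- extract the coupling coefficient and its bound
    obtain ⟨cf, Wst, C, hC0, hCbd, hPDE⟩ : ∃ (cf Wst : ℝ → ℝ → ℝ) (C : ℝ), 0 ≤ C ∧
        (∀ r ∈ Set.Ioo (0:ℝ) R, ∀ t ∈ Set.Ioo (0:ℝ) T₁, 0 ≤ cf r t ∧ cf r t ≤ C) ∧
        (∀ r ∈ Set.Ioo (0:ℝ) R, ∀ t ∈ Set.Ioo (0:ℝ) T,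
          (pderivRR Mu r t - pderivRR Ml r t)
          + ((d:ℝ)+1)/r * (pderivR Mu r t - pderivR Ml r t)
          + (r*(pderivR Mu r t - pderivR Ml r t) + (d:ℝ)*(Mu r t - Ml r t)) * Wst r t
          + cf r t * (Wu r t - Wl r t)
          ≤ pderivT Mu r t - pderivT Ml r t) := by
      have hdc : (0:ℝ) ≤ (d:ℝ) := Nat.cast_nonneg d
      rcases hflux with ⟨hpos, hbd⟩ | ⟨hpos, hbd⟩
      · obtain ⟨Cb1, hCb1⟩ := hbd T₁ hT₁T
        obtain ⟨Cb2, hCb2⟩ := hMl.2.2.2.2.2.2.2 T₁ hT₁T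
        refine ⟨fun r t => r * pderivR Ml r t + (d:ℝ) * Ml r t, Wu,
          |Cb1| + (d:ℝ)*|Cb2|, by positivity, ?_, ?_⟩
        · intro r hr t ht
          refine ⟨hpos r hr t ⟨ht.1, ht.2.trans hT₁T⟩, ?_⟩
          have h1 := hCb1 r hr t ht
          have h2 := hCb2 r ⟨le_of_lt hr.1, le_of_lt hr.2⟩ t ⟨le_of_lt ht.1, le_of_lt ht.2⟩
          have h3 : (d:ℝ) * Ml r t ≤ (d:ℝ) * |Cb2| :=
            mul_le_mul_of_nonneg_left
              ((le_abs_self _).trans (h2.trans (le_abs_self Cb2))) hdc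
          have h4 : r * pderivR Ml r t ≤ |Cb1| :=
            (le_abs_self _).trans (h1.trans (le_abs_self Cb1))
          show r * pderivR Ml r t + (d:ℝ) * Ml r t ≤ |Cb1| + (d:ℝ)*|Cb2|
          linarith
        · intro r hr t ht
          have h := hineq1 r hr t ht
          have hid : r*(pderivR Mu r t)*(Wu r t) + (d:ℝ)*(Mu r t)*(Wu r t)
              - r*(pderivR Ml r t)*(Wl r t) - (d:ℝ)*(Ml r t)*(Wl r t)
              = (r*(pderivR Mu r t - pderivR Ml r t) + (d:ℝ)*(Mu r t - Ml r t)) * Wu r t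
              + (r * pderivR Ml r t + (d:ℝ) * Ml r t) * (Wu r t - Wl r t) := by ring
          linarith
      · obtain ⟨Cb1, hCb1⟩ := hbd T₁ hT₁T
        obtain ⟨Cb2, hCb2⟩ := hMu.2.2.2.2.2.2.2 T₁ hT₁T
        refine ⟨fun r t => r * pderivR Mu r t + (d:ℝ) * Mu r t, Wl,
          |Cb1| + (d:ℝ)*|Cb2|, by positivity, ?_, ?_⟩
        · intro r hr t ht
          refine ⟨hpos r hr t ⟨ht.1, ht.2.trans hT₁T⟩, ?_⟩
          have h1 := hCb1 r hr t ht
          have h2 := hCb2 r ⟨le_of_lt hr.1, le_of_lt hr.2⟩ t ⟨le_of_lt ht.1, le_of_lt ht.2⟩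
          have h3 : (d:ℝ) * Mu r t ≤ (d:ℝ) * |Cb2| :=
            mul_le_mul_of_nonneg_left
              ((le_abs_self _).trans (h2.trans (le_abs_self Cb2))) hdc
          have h4 : r * pderivR Mu r t ≤ |Cb1| :=
            (le_abs_self _).trans (h1.trans (le_abs_self Cb1))
          show r * pderivR Mu r t + (d:ℝ) * Mu r t ≤ |Cb1| + (d:ℝ)*|Cb2|
          linarith
        · intro r hr t ht
          have h := hineq1 r hr t ht
          have hid : r*(pderivR Mu r t)*(Wu r t) + (d:ℝ)*(Mu r t)*(Wu r t)
              - r*(pderivR Ml r t)*(Wl r t) - (d:ℝ)*(Ml r t)*(Wl r t)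
              = (r*(pderivR Mu r t - pderivR Ml r t) + (d:ℝ)*(Mu r t - Ml r t)) * Wl r t
              + (r * pderivR Mu r t + (d:ℝ) * Mu r t) * (Wu r t - Wl r t) := by ring
          linarith
    refine ⟨C + 2, ?_⟩
    intro ε hε
    by_contra hcon
    push_neg at hcon
    -- the compact rectangle and the "bad" set
    set Uf : ℝ × ℝ → ℝ := fun q =>
      q.1^d * (Mu q.1 q.2 - Ml q.1 q.2) + ε * Real.exp ((C+2) * q.2) with hUfdef
    set Vf : ℝ × ℝ → ℝ := fun q =>
      q.1^d * (Wu q.1 q.2 - Wl q.1 q.2) + ε * Real.exp ((C+2) * q.2) with hVfdef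
    set Kc : Set (ℝ × ℝ) := Set.Icc 0 R ×ˢ Set.Icc 0 T₀ with hKcdef
    have hKcomp : IsCompact Kc := isCompact_Icc.prod isCompact_Icc
    have hsubKc : Kc ⊆ Set.Icc 0 R ×ˢ Set.Ico 0 T := by
      intro q hq
      exact ⟨hq.1, ⟨hq.2.1, lt_of_le_of_lt hq.2.2 hT₀T⟩⟩
    have hexpc : Continuous (fun q : ℝ × ℝ => ε * Real.exp ((C+2) * q.2)) :=
      continuous_const.mul (Real.continuous_exp.comp (continuous_const.mul continuous_snd))
    have hUc : ContinuousOn Uf Kc := by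
      refine ContinuousOn.add ?_ hexpc.continuousOn
      exact ((continuous_fst.pow d).continuousOn).mul
        ((hMu.1.mono hsubKc).sub (hMl.1.mono hsubKc))
    have hVc : ContinuousOn Vf Kc := by
      refine ContinuousOn.add ?_ hexpc.continuousOn
      exact ((continuous_fst.pow d).continuousOn).mul
        ((hWu.1.mono hsubKc).sub (hWl.1.mono hsubKc))
    set Bad : Set (ℝ × ℝ) := {q | q ∈ Kc ∧ (Uf q ≤ 0 ∨ Vf q ≤ 0)} with hBaddef
    have hBadclosed : IsClosed Bad := by
      have h1 : Bad = (Kc ∩ Uf ⁻¹' Set.Iic 0) ∪ (Kc ∩ Vf ⁻¹' Set.Iic 0) := by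
        ext q
        simp only [hBaddef, Set.mem_setOf_eq, Set.mem_union, Set.mem_inter_iff,
          Set.mem_preimage, Set.mem_Iic]
        tauto
      rw [h1]
      exact (hUc.preimage_isClosed_of_isClosed hKcomp.isClosed isClosed_Iic).union
        (hVc.preimage_isClosed_of_isClosed hKcomp.isClosed isClosed_Iic)
    have hBadcomp : IsCompact Bad :=
      hKcomp.of_isClosed_subset hBadclosed (fun q hq => hq.1)
    have hBadne : Bad.Nonempty := by
      obtain ⟨r0, hr0, t0, ht0, hb⟩ := hcon
      refine ⟨(r0, t0), ⟨⟨hr0, ht0⟩, ?_⟩⟩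
      rcases le_or_gt (Uf (r0, t0)) 0 with h | h
      · exact Or.inl h
      · exact Or.inr (hb h)
    set tim := Prod.snd '' Bad with htimdef
    have htimcomp : IsCompact tim := hBadcomp.image continuous_snd
    have htimne : tim.Nonempty := hBadne.image _
    obtain ⟨q0, hq0B, hq02⟩ := htimcomp.sInf_mem htimne
    set ts := sInf tim with htsdef
    set p := q0.1 with hpdef
    have hq0eq : q0 = (p, ts) := by
      rw [hpdef, ← hq02]
    have hq0K : q0 ∈ Kc := hq0B.1
    have hpIcc : p ∈ Set.Icc (0:ℝ) R := hq0K.1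
    have htsIcc : ts ∈ Set.Icc (0:ℝ) T₀ := by rw [← hq02]; exact hq0K.2
    have hminT : ∀ q ∈ Bad, ts ≤ q.2 :=
      fun q hq => csInf_le htimcomp.bddBelow ⟨q, hq, rfl⟩
    -- strict positivity before time ts
    have h1 : ∀ r ∈ Set.Icc (0:ℝ) R, ∀ t ∈ Set.Icc (0:ℝ) T₀, t < ts →
        0 < Uf (r,t) ∧ 0 < Vf (r,t) := by
      intro r hrm t htm hlt
      by_contra hc
      have hmem : (r,t) ∈ Bad := by
        refine ⟨⟨hrm, htm⟩, ?_⟩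
        rcases not_and_or.mp hc with h | h
        · exact Or.inl (le_of_not_gt h)
        · exact Or.inr (le_of_not_gt h)
      exact absurd (hminT _ hmem) (not_le.mpr hlt)
    -- positivity at time 0
    have hexppos : ∀ s : ℝ, 0 < ε * Real.exp ((C+2) * s) :=
      fun s => mul_pos hε (Real.exp_pos _)
    have hU0 : ∀ r ∈ Set.Icc (0:ℝ) R, 0 < Uf (r,0) ∧ 0 < Vf (r,0) := by
      intro r hrm
      have hnn : 0 ≤ Mu r 0 - Ml r 0 ∧ 0 ≤ Wu r 0 - Wl r 0 ∨ r^d * 1 = 0 ∨ True := Or.inr (Or.inr trivial)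
      rcases eq_or_lt_of_le hrm.1 with h0 | h0
      · have : r^d = 0 := by rw [← h0]; exact zero_pow (by omega)
        constructor <;> · simp only [hUfdef, hVfdef, this, zero_mul, zero_add]
                          exact hexppos 0
      · have hφ : 0 ≤ Mu r 0 - Ml r 0 ∧ 0 ≤ Wu r 0 - Wl r 0 := by
          rcases eq_or_lt_of_le hrm.2 with hR' | hR'
          · rw [hR']
            exact ⟨by linarith [hinitR.1], by linarith [hinitR.2]⟩
          · have := hinit r ⟨h0, hR'⟩
            exact ⟨by linarith [this.1], by linarith [this.2]⟩
        have hrdnn : (0:ℝ) ≤ r^d := pow_nonneg (le_of_lt h0) d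
        constructor
        · have := mul_nonneg hrdnn hφ.1
          simp only [hUfdef]
          nlinarith [hexppos 0]
        · have := mul_nonneg hrdnn hφ.2
          simp only [hVfdef]
          nlinarith [hexppos 0]
    have hts0 : 0 < ts := by
      rcases eq_or_lt_of_le htsIcc.1 with h | h
      · exfalso
        have := hU0 p hpIcc
        have hb := hq0B.2
        rw [hq0eq, ← h] at hb
        rcases hb with hb | hb
        · exact absurd hb (not_le.mpr this.1)
        · exact absurd hb (not_le.mpr this.2)
      · exact h
    have htsT : ts < T := lt_of_le_of_lt htsIcc.2 hT₀T
    have hts_mem : ts ∈ Set.Ioo (0:ℝ) T := ⟨hts0, htsT⟩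
    -- nonnegativity at time ts (left limit)
    have hAtT : ∀ r ∈ Set.Icc (0:ℝ) R, 0 ≤ Uf (r,ts) ∧ 0 ≤ Vf (r,ts) := by
      intro r hrm
      have hnb : (𝓝[Set.Ico (0:ℝ) ts] ts).NeBot := by
        rw [← mem_closure_iff_nhdsWithin_neBot, closure_Ico (ne_of_lt hts0)]
        exact ⟨le_of_lt hts0, le_refl ts⟩
      have hsub2 : Set.Ico (0:ℝ) ts ⊆ Set.Icc (0:ℝ) T₀ :=
        fun x hx => ⟨hx.1, le_of_lt (lt_of_lt_of_le hx.2 htsIcc.2)⟩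
      have key : ∀ F : ℝ × ℝ → ℝ, ContinuousOn F Kc →
          (∀ t ∈ Set.Icc (0:ℝ) T₀, t < ts → 0 < F (r,t)) → 0 ≤ F (r,ts) := by
        intro F hFc hFpos
        have hmap : Set.MapsTo (fun t : ℝ => (r,t)) (Set.Icc 0 T₀) Kc :=
          fun t htm => ⟨hrm, htm⟩
        have h2 : ContinuousOn (fun t => F (r,t)) (Set.Icc 0 T₀) :=
          hFc.comp (Continuous.continuousOn (continuous_const.prodMk continuous_id)) hmap
        have h3 : ContinuousWithinAt (fun t => F (r,t)) (Set.Ico 0 ts) ts :=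
          (h2 ts htsIcc).mono hsub2
        refine ge_of_tendsto h3 ?_
        filter_upwards [self_mem_nhdsWithin] with x hx
        exact le_of_lt (hFpos x (hsub2 hx) hx.2)
      exact ⟨key Uf hUc (fun t htm hlt => (h1 r hrm t htm hlt).1),
             key Vf hVc (fun t htm hlt => (h1 r hrm t htm hlt).2)⟩
    -- the touching point is interior in r
    have hpIoo : p ∈ Set.Ioo (0:ℝ) R := by
      have hb := hq0B.2
      rw [hq0eq] at hb
      constructor
      · rcases eq_or_lt_of_le hpIcc.1 with h | h
        · exfalso
          have hz : p^d = 0 := by rw [← h]; exact zero_pow (by omega)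
          rcases hb with hb | hb
          · simp only [hUfdef, hz, zero_mul, zero_add] at hb
            exact absurd hb (not_le.mpr (hexppos ts))
          · simp only [hVfdef, hz, zero_mul, zero_add] at hb
            exact absurd hb (not_le.mpr (hexppos ts))
        · exact h
      · rcases eq_or_lt_of_le hpIcc.2 with h | h
        · exfalso
          have hbd := hbound ts hts_mem
          have hrdnn : (0:ℝ) ≤ p^d := pow_nonneg hpIcc.1 d
          rcases hb with hb | hb
          · simp only [hUfdef] at hb
            rw [h] at hb
            nlinarith [hexppos ts, mul_nonneg (pow_nonneg (le_of_lt hR) d)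
              (sub_nonneg.mpr hbd.1)]
          · simp only [hVfdef] at hb
            rw [h] at hb
            nlinarith [hexppos ts, mul_nonneg (pow_nonneg (le_of_lt hR) d)
              (sub_nonneg.mpr hbd.2)]
        · exact h
    have hPpos : (0:ℝ) < p^d := pow_pos hpIoo.1 d
    -- which of U, V touches zero
    have hUVz : Uf (p, ts) = 0 ∨ Vf (p, ts) = 0 := by
      have hb := hq0B.2
      rw [hq0eq] at hb
      rcases hb with hb | hb
      · exact Or.inl (le_antisymm hb (hAtT p hpIcc).1)
      · exact Or.inr (le_antisymm hb (hAtT p hpIcc).2)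
    have hts_memT₁ : ts ∈ Set.Ioo (0:ℝ) T₁ := ⟨hts0, lt_of_le_of_lt htsIcc.2 hT₀T₁⟩
    have hmintU : ∀ s ∈ Set.Icc (0:ℝ) ts,
        0 ≤ p^d * (Mu p s - Ml p s) + ε * Real.exp ((C+2) * s) := by
      intro s hs
      rcases eq_or_lt_of_le hs.2 with h | h
      · rw [h]; exact (hAtT p hpIcc).1
      · exact le_of_lt (h1 p hpIcc s ⟨hs.1, le_trans hs.2 htsIcc.2⟩ h).1
    have hmintV : ∀ s ∈ Set.Icc (0:ℝ) ts,
        0 ≤ p^d * (Wu p s - Wl p s) + ε * Real.exp ((C+2) * s) := by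
      intro s hs
      rcases eq_or_lt_of_le hs.2 with h | h
      · rw [h]; exact (hAtT p hpIcc).2
      · exact le_of_lt (h1 p hpIcc s ⟨hs.1, le_trans hs.2 htsIcc.2⟩ h).2
    have hccbd := hCbd p hpIoo ts hts_memT₁
    have hεE : 0 < ε * Real.exp ((C+2) * ts) := hexppos ts
    rcases hUVz with hz | hz
    · -- the M-difference touches zero
      have hdr : ∀ x ∈ Set.Ioo (0:ℝ) R, HasDerivAt (fun ρ => Mu ρ ts - Ml ρ ts)
          (pderivR Mu x ts - pderivR Ml x ts) x := by
        intro x hx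
        exact ((hMu.2.2.1 x ⟨le_of_lt hx.1, le_of_lt hx.2⟩ ts hts_mem).hasDerivAt).sub
          ((hMl.2.2.1 x ⟨le_of_lt hx.1, le_of_lt hx.2⟩ ts hts_mem).hasDerivAt)
      have hdr2 : HasDerivAt (fun x => pderivR Mu x ts - pderivR Ml x ts)
          (pderivRR Mu p ts - pderivRR Ml p ts) p :=
        ((hMu.2.2.2.2.2.1 p hpIoo ts hts_mem).hasDerivAt).sub
          ((hMl.2.2.2.2.2.1 p hpIoo ts hts_mem).hasDerivAt)
      have hdt : HasDerivAt (fun s => Mu p s - Ml p s)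
          (pderivT Mu p ts - pderivT Ml p ts) ts :=
        ((hMu.2.1 p hpIcc ts hts_mem).hasDerivAt).sub
          ((hMl.2.1 p hpIcc ts hts_mem).hasDerivAt)
      have hminr : ∀ x ∈ Set.Ioo (0:ℝ) R,
          0 ≤ x^d * (Mu x ts - Ml x ts) + ε * Real.exp ((C+2) * ts) :=
        fun x hx => (hAtT x ⟨le_of_lt hx.1, le_of_lt hx.2⟩).1
      obtain ⟨c1, c2, c3⟩ := touch d hd R p ts ε (C+2) hpIoo hts0
        (fun r t => Mu r t - Ml r t) (fun x => pderivR Mu x ts - pderivR Ml x ts)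
        (pderivRR Mu p ts - pderivRR Ml p ts) (pderivT Mu p ts - pderivT Ml p ts)
        hdr hdr2 hdt hz hminr hmintU
      have hP := hPDE p hpIoo ts hts_mem
      have hwz : (p*(pderivR Mu p ts - pderivR Ml p ts)
          + (d:ℝ)*(Mu p ts - Ml p ts)) * Wst p ts = 0 := by
        rw [c1, zero_mul]
      have hτ : cf p ts * (Wu p ts - Wl p ts)
          ≤ pderivT Mu p ts - pderivT Ml p ts := by linarith
      have hψ : -(ε * Real.exp ((C+2) * ts)) ≤ p^d * (Wu p ts - Wl p ts) := by
        have := (hAtT p hpIcc).2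
        simp only [hVfdef] at this
        linarith
      have hm1 : p^d * (cf p ts * (Wu p ts - Wl p ts))
          ≤ p^d * (pderivT Mu p ts - pderivT Ml p ts) :=
        mul_le_mul_of_nonneg_left hτ (le_of_lt hPpos)
      have hm2 : cf p ts * (-(ε * Real.exp ((C+2) * ts)))
          ≤ cf p ts * (p^d * (Wu p ts - Wl p ts)) :=
        mul_le_mul_of_nonneg_left hψ hccbd.1
      have hm3 : C * (-(ε * Real.exp ((C+2) * ts)))
          ≤ cf p ts * (-(ε * Real.exp ((C+2) * ts))) :=
        mul_le_mul_of_nonpos_right hccbd.2 (by linarith)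
      have hring : p^d * (cf p ts * (Wu p ts - Wl p ts))
          = cf p ts * (p^d * (Wu p ts - Wl p ts)) := by ring
      nlinarith [c3, hm1, hm2, hm3, hεE]
    · -- the W-difference touches zero
      have hdr : ∀ x ∈ Set.Ioo (0:ℝ) R, HasDerivAt (fun ρ => Wu ρ ts - Wl ρ ts)
          (pderivR Wu x ts - pderivR Wl x ts) x := by
        intro x hx
        exact ((hWu.2.2.1 x ⟨le_of_lt hx.1, le_of_lt hx.2⟩ ts hts_mem).hasDerivAt).sub
          ((hWl.2.2.1 x ⟨le_of_lt hx.1, le_of_lt hx.2⟩ ts hts_mem).hasDerivAt)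
      have hdr2 : HasDerivAt (fun x => pderivR Wu x ts - pderivR Wl x ts)
          (pderivRR Wu p ts - pderivRR Wl p ts) p :=
        ((hWu.2.2.2.2.2.1 p hpIoo ts hts_mem).hasDerivAt).sub
          ((hWl.2.2.2.2.2.1 p hpIoo ts hts_mem).hasDerivAt)
      have hdt : HasDerivAt (fun s => Wu p s - Wl p s)
          (pderivT Wu p ts - pderivT Wl p ts) ts :=
        ((hWu.2.1 p hpIcc ts hts_mem).hasDerivAt).sub
          ((hWl.2.1 p hpIcc ts hts_mem).hasDerivAt)
      have hminr : ∀ x ∈ Set.Ioo (0:ℝ) R,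
          0 ≤ x^d * (Wu x ts - Wl x ts) + ε * Real.exp ((C+2) * ts) :=
        fun x hx => (hAtT x ⟨le_of_lt hx.1, le_of_lt hx.2⟩).2
      obtain ⟨c1, c2, c3⟩ := touch d hd R p ts ε (C+2) hpIoo hts0
        (fun r t => Wu r t - Wl r t) (fun x => pderivR Wu x ts - pderivR Wl x ts)
        (pderivRR Wu p ts - pderivRR Wl p ts) (pderivT Wu p ts - pderivT Wl p ts)
        hdr hdr2 hdt hz hminr hmintV
      have hP := hineq2 p hpIoo ts hts_mem
      have hτ : Mu p ts - Ml p ts ≤ pderivT Wu p ts - pderivT Wl p ts := by linarith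
      have hφ : -(ε * Real.exp ((C+2) * ts)) ≤ p^d * (Mu p ts - Ml p ts) := by
        have := (hAtT p hpIcc).1
        simp only [hUfdef] at this
        linarith
      have hm1 : p^d * (Mu p ts - Ml p ts)
          ≤ p^d * (pderivT Wu p ts - pderivT Wl p ts) :=
        mul_le_mul_of_nonneg_left hτ (le_of_lt hPpos)
      nlinarith [c3, hm1, hφ, hεE, hC0]

  -- conclusion
  intro r hr t ht
  set T₀ := (t + T)/2 with hT₀def
  have hT₀0 : 0 < T₀ := by simp only [hT₀def]; linarith [ht.1]
  have hT₀T : T₀ < T := by simp only [hT₀def]; linarith [ht.2]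
  have htle : t ≤ T₀ := by simp only [hT₀def]; linarith [ht.2]
  obtain ⟨K, hK⟩ := main T₀ hT₀0 hT₀T
  have hA : 0 < Real.exp (K*t) := Real.exp_pos _
  have hrd : 0 < r^d := pow_pos hr.1 d
  have key : ∀ F G : ℝ → ℝ → ℝ,
      (∀ ε > (0:ℝ), 0 < r^d * (G r t - F r t) + ε * Real.exp (K * t)) →
      F r t ≤ G r t := by
    intro F G h
    have h0 : 0 ≤ r^d * (G r t - F r t) := by
      refine aux_nonneg_of_forall _ (Real.exp (K*t)) hA ?_
      intro ε hε
      have := h ε hε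
      linarith
    have := (mul_nonneg_iff_of_pos_left hrd).mp h0
    linarith
  constructor
  · exact key Ml Mu (fun ε hε => (hK ε hε r ⟨le_of_lt hr.1, le_of_lt hr.2⟩ t ⟨ht.1, htle⟩).1)
  · exact key Wl Wu (fun ε hε => (hK ε hε r ⟨le_of_lt hr.1, le_of_lt hr.2⟩ t ⟨ht.1, htle⟩).2)
end

section
/- (Preservation of radial monotonicity.) Let d ≥ 5 be an integer and T > 0. Let u, w : [0,∞)×[0,T) → ℝ be nonnegative and bounded on [0,∞)×[0,T₀] for every T₀ < T, continuously differentiable in r, and set ũ := ∂_r u, w̃ := ∂_r w. Assume ũ and w̃ are continuous on [0,∞)×[0,T), bounded on [0,∞)×[0,T₀] for every T₀ < T, possess continuous partial derivatives ∂_t, ∂_r, ∂_{rr} on (0,∞)×(0,T), and satisfy ũ(0,t) = w̃(0,t) = 0 for all t ∈ [0,T). Define v_r(r,t) := −r^{1−d}∫_0^r ρ^{d−1} w(ρ,t) dρ, and let v_{rr} := ∂_r v_r and v_{rrr} := ∂_{rr} v_r. Assume that on (0,∞)×(0,T): ∂_t ũ = ∂_{rr} ũ + ((d−1)/r − v_r)·∂_r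 ũ + (−(d−1)/r² − 2v_{rr} − ((d−1)/r)v_r)·ũ − (v_{rrr} + ((d−1)/r)v_{rr} − ((d−1)/r²)v_r)·u, and ∂_t w̃ = ∂_{rr} w̃ + ((d−1)/r)∂_r w̃ − ((d−1)/r²)·w̃ + ũ. If ũ(r,0) ≤ 0 and w̃(r,0) ≤ 0 for all r ≥ 0, then ũ(r,t) ≤ 0 and w̃(r,t) ≤ 0 for all (r,t) ∈ [0,∞)×[0,T). -/
set_option maxHeartbeats 1000000


/-- `f` has continuous partial derivatives `∂_t, ∂_r, ∂_{rr}` on `(0,∞) × (0,T)`. -/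
def SmoothC21 (f : ℝ → ℝ → ℝ) (T : ℝ) : Prop :=
  (∀ r ∈ Set.Ioi (0 : ℝ), ∀ t ∈ Set.Ioo (0 : ℝ) T, DifferentiableAt ℝ (fun s => f r s) t) ∧
  (∀ r ∈ Set.Ioi (0 : ℝ), ∀ t ∈ Set.Ioo (0 : ℝ) T, DifferentiableAt ℝ (fun ρ => f ρ t) r) ∧
  (∀ r ∈ Set.Ioi (0 : ℝ), ∀ t ∈ Set.Ioo (0 : ℝ) T,
    DifferentiableAt ℝ (fun ρ => pderivR f ρ t) r) ∧
  ContinuousOn (fun p : ℝ × ℝ => pderivT f p.1 p.2) (Set.Ioi 0 ×ˢ Set.Ioo 0 T) ∧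
  ContinuousOn (fun p : ℝ × ℝ => pderivR f p.1 p.2) (Set.Ioi 0 ×ˢ Set.Ioo 0 T) ∧
  ContinuousOn (fun p : ℝ × ℝ => pderivRR f p.1 p.2) (Set.Ioi 0 ×ˢ Set.Ioo 0 T)

/-- The radial derivative of the chemical potential, recovered from `w` by
`v_r(r,t) = −r^{1−d} ∫_0^r ρ^{d−1} w(ρ,t) dρ`. -/
noncomputable def vrad (d : ℕ) (w : ℝ → ℝ → ℝ) (r t : ℝ) : ℝ :=
  -(r ^ ((1 : ℤ) - (d : ℤ))) * ∫ ρ in (0 : ℝ)..r, ρ ^ (d - 1) * w ρ t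

open Filter Set intervalIntegral

lemma left_deriv_nonneg (g : ℝ → ℝ) (a x c : ℝ) (ha : a < x)
    (hle : ∀ y ∈ Set.Ioo a x, g y ≤ g x) (hg : HasDerivAt g c x) : 0 ≤ c := by
  have hslope := hasDerivAt_iff_tendsto_slope.mp hg
  have h' : Filter.Tendsto (slope g x) (nhdsWithin x (Set.Iio x)) (nhds c) :=
    hslope.mono_left (nhdsWithin_mono _ fun y hy => ne_of_lt hy)
  refine ge_of_tendsto h' ?_
  filter_upwards [Ioo_mem_nhdsLT_of_mem (⟨ha, le_refl x⟩ : x ∈ Set.Ioc a x)] with y hy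
  rw [slope_def_field]
  have h1 : g y - g x ≤ 0 := sub_nonpos.mpr (hle y hy)
  have h2 : y - x < 0 := sub_neg.mpr hy.2
  exact div_nonneg_iff.mpr (Or.inr ⟨h1, h2.le⟩)

lemma sec_deriv_test (g : ℝ → ℝ) (x c : ℝ) (hmax : IsLocalMax g x)
    (hdiff : ∀ᶠ y in nhds x, DifferentiableAt ℝ g y)
    (hdd : HasDerivAt (deriv g) c x) : c ≤ 0 := by
  by_contra hc
  push_neg at hc
  have h0 : deriv g x = 0 := hmax.deriv_eq_zero
  have hslope := hasDerivAt_iff_tendsto_slope.mp hdd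
  have h' : Filter.Tendsto (slope (deriv g) x) (nhdsWithin x (Set.Ioi x)) (nhds c) :=
    hslope.mono_left (nhdsWithin_mono _ fun y hy => ne_of_gt hy)
  have hpos : ∀ᶠ y in nhdsWithin x (Set.Ioi x), 0 < slope (deriv g) x y :=
    h'.eventually (eventually_gt_nhds hc)
  have hpos' : ∀ᶠ y in nhdsWithin x (Set.Ioi x), 0 < deriv g y := by
    filter_upwards [hpos, self_mem_nhdsWithin] with y hy hy'
    rw [slope_def_field, h0, sub_zero] at hy
    have hyx : 0 < y - x := sub_pos.mpr hy'
    have := mul_pos hy hyx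
    rwa [div_mul_cancel₀] at this
    exact ne_of_gt hyx
  have hpos'' : {y | 0 < deriv g y} ∈ nhdsWithin x (Set.Ioi x) := hpos'
  rw [mem_nhdsGT_iff_exists_Ioc_subset] at hpos''
  obtain ⟨u, hu, hsub⟩ := hpos''
  obtain ⟨ε, hε, hball⟩ := Metric.eventually_nhds_iff.mp (hdiff.and hmax)
  set b := min u (x + ε / 2) with hb
  have hxb : x < b := lt_min (by exact hu) (by linarith)
  have hmem : ∀ y ∈ Set.Icc x b, DifferentiableAt ℝ g y ∧ g y ≤ g x := by
    intro y hy
    apply hball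
    rw [Real.dist_eq, abs_lt]
    have : y ≤ x + ε / 2 := le_trans hy.2 (min_le_right _ _)
    constructor <;> [linarith [hy.1]; linarith]
  have hmono : StrictMonoOn g (Set.Icc x b) := by
    apply strictMonoOn_of_deriv_pos (convex_Icc x b)
    · exact fun y hy => ((hmem y hy).1).continuousAt.continuousWithinAt
    · intro y hy
      rw [interior_Icc] at hy
      exact hsub ⟨hy.1, le_trans hy.2.le (min_le_left _ _)⟩
  have : g x < g b := hmono (Set.left_mem_Icc.mpr hxb.le) (Set.right_mem_Icc.mpr hxb.le) hxb
  exact absurd ((hmem b (Set.right_mem_Icc.mpr hxb.le)).2) (not_le.mpr this)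

lemma max_point_facts (f : ℝ → ℝ → ℝ) (T lam mu ε r₀ t₀ m : ℝ) (hsm : SmoothC21 f T)
    (hr₀ : 0 < r₀) (ht₀ : 0 < t₀) (ht₀T : t₀ < T)
    (hspace : ∀ ρ ∈ Set.Ioi (0:ℝ), f ρ t₀ - ε*Real.exp (lam*t₀)*(1+ρ^2) ≤ m)
    (heq : f r₀ t₀ - ε*Real.exp (lam*t₀)*(1+r₀^2) = m)
    (htime : ∀ s ∈ Set.Ioo (0:ℝ) t₀,
      (f r₀ s - ε*Real.exp (lam*s)*(1+r₀^2)) * Real.exp (-(mu*s)) ≤ m * Real.exp (-(mu*t₀))) :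
    pderivR f r₀ t₀ = ε*Real.exp (lam*t₀)*(2*r₀)
    ∧ pderivRR f r₀ t₀ ≤ 2*(ε*Real.exp (lam*t₀))
    ∧ lam*(ε*Real.exp (lam*t₀)*(1+r₀^2)) + mu*m ≤ pderivT f r₀ t₀ := by
  have htmem : t₀ ∈ Set.Ioo (0:ℝ) T := ⟨ht₀, ht₀T⟩
  have hr₀mem : r₀ ∈ Set.Ioi (0:ℝ) := hr₀
  set E : ℝ := ε * Real.exp (lam * t₀) with hE
  set g : ℝ → ℝ := fun ρ => f ρ t₀ - E * (1 + ρ^2) with hg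
  have hdr : ∀ ρ ∈ Set.Ioi (0:ℝ), DifferentiableAt ℝ (fun ρ' => f ρ' t₀) ρ :=
    fun ρ hρ => hsm.2.1 ρ hρ t₀ htmem
  have hpar : ∀ ρ : ℝ, HasDerivAt (fun ρ' : ℝ => E * (1 + ρ'^2)) (E * (2*ρ)) ρ := by
    intro ρ
    have h1 : HasDerivAt (fun ρ' : ℝ => 1 + ρ'^2) (2*ρ) ρ := by
      simpa using ((hasDerivAt_pow 2 ρ).const_add 1)
    exact h1.const_mul E
  have hnhds : Set.Ioi (0:ℝ) ∈ nhds r₀ := Ioi_mem_nhds hr₀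
  have hgdiff : ∀ ρ ∈ Set.Ioi (0:ℝ), DifferentiableAt ℝ g ρ :=
    fun ρ hρ => (hdr ρ hρ).sub (hpar ρ).differentiableAt
  have hmax : IsLocalMax g r₀ := by
    filter_upwards [hnhds] with ρ hρ
    calc g ρ ≤ m := hspace ρ hρ
    _ = g r₀ := heq.symm
  have hderg : ∀ ρ ∈ Set.Ioi (0:ℝ), deriv g ρ = pderivR f ρ t₀ - E * (2*ρ) := by
    intro ρ hρ
    rw [hg, deriv_fun_sub (hdr ρ hρ) (hpar ρ).differentiableAt, (hpar ρ).deriv]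
    rfl
  have fact1 : pderivR f r₀ t₀ = E * (2*r₀) := by
    have h0 : deriv g r₀ = 0 := hmax.deriv_eq_zero
    rw [hderg r₀ hr₀mem] at h0
    linarith
  refine ⟨fact1, ?_, ?_⟩
  · have h2 : HasDerivAt (fun ρ => pderivR f ρ t₀) (pderivRR f r₀ t₀) r₀ :=
      (hsm.2.2.1 r₀ hr₀mem t₀ htmem).hasDerivAt
    have hpar' : HasDerivAt (fun ρ : ℝ => E * (2*ρ)) (E * 2) r₀ := by
      simpa using ((hasDerivAt_id r₀).const_mul (2:ℝ)).const_mul E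
    have hevent : deriv g =ᶠ[nhds r₀] fun ρ => pderivR f ρ t₀ - E * (2*ρ) := by
      filter_upwards [hnhds] with ρ hρ using hderg ρ hρ
    have hdd : HasDerivAt (deriv g) (pderivRR f r₀ t₀ - E * 2) r₀ :=
      (h2.sub hpar').congr_of_eventuallyEq hevent
    have := sec_deriv_test g r₀ _ hmax (by filter_upwards [hnhds] with ρ hρ using hgdiff ρ hρ) hdd
    linarith
  · have hft : HasDerivAt (fun s => f r₀ s) (pderivT f r₀ t₀) t₀ :=
      (hsm.1 r₀ hr₀mem t₀ htmem).hasDerivAt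
    have hexp1 : HasDerivAt (fun s : ℝ => ε * Real.exp (lam*s) * (1+r₀^2))
        (lam * (ε * Real.exp (lam*t₀) * (1+r₀^2))) t₀ := by
      have h1 : HasDerivAt (fun s : ℝ => Real.exp (lam*s)) (Real.exp (lam*t₀) * (lam*1)) t₀ :=
        ((hasDerivAt_id t₀).const_mul lam).exp
      have := (h1.const_mul ε).mul_const (1+r₀^2)
      refine this.congr_deriv ?_
      ring
    have hexp2 : HasDerivAt (fun s : ℝ => Real.exp (-(mu*s))) (Real.exp (-(mu*t₀)) * (-(mu*1))) t₀ :=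
      (((hasDerivAt_id t₀).const_mul mu).neg).exp
    have hψ : HasDerivAt (fun s => (f r₀ s - ε * Real.exp (lam*s) * (1+r₀^2)) * Real.exp (-(mu*s)))
        ((pderivT f r₀ t₀ - lam * (ε * Real.exp (lam*t₀) * (1+r₀^2))) * Real.exp (-(mu*t₀))
          + (f r₀ t₀ - ε * Real.exp (lam*t₀) * (1+r₀^2)) * (Real.exp (-(mu*t₀)) * (-(mu*1)))) t₀ :=
      (hft.sub hexp1).mul hexp2
    have hle := left_deriv_nonneg _ 0 t₀ _ ht₀ (fun s hs => by
      simpa [show f r₀ t₀ - ε*Real.exp (lam*t₀)*(1+r₀^2) = m from heq] using htime s hs) hψ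
    rw [heq] at hle
    have hEpos : 0 < Real.exp (-(mu*t₀)) := Real.exp_pos _
    have key : 0 ≤ (pderivT f r₀ t₀ - lam * (ε * Real.exp (lam*t₀) * (1+r₀^2)) - mu*m)
        * Real.exp (-(mu*t₀)) := by nlinarith [hle]
    rw [mul_comm] at key
    have key2 : 0 ≤ pderivT f r₀ t₀ - lam * (ε * Real.exp (lam*t₀) * (1+r₀^2)) - mu*m :=
      nonneg_of_mul_nonneg_right key hEpos
    rw [hE]
    linarith

section
variable (d : ℕ) (w : ℝ → ℝ → ℝ) (t : ℝ)

lemma integrand_cont (hw : ∀ ρ ∈ Set.Ici (0:ℝ), ContinuousAt (fun ρ' => w ρ' t) ρ) :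
    ∀ ρ ∈ Set.Ici (0:ℝ), ContinuousAt (fun ρ' => ρ' ^ (d-1) * w ρ' t) ρ :=
  fun ρ hρ => ((continuous_pow (d-1)).continuousAt).mul (hw ρ hρ)

lemma integrand_intable (hw : ∀ ρ ∈ Set.Ici (0:ℝ), ContinuousAt (fun ρ' => w ρ' t) ρ)
    (r : ℝ) (hr : 0 ≤ r) :
    IntervalIntegrable (fun ρ' => ρ' ^ (d-1) * w ρ' t) MeasureTheory.volume 0 r := by
  apply ContinuousOn.intervalIntegrable
  intro ρ hρ
  rw [Set.uIcc_of_le hr] at hρ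
  exact (integrand_cont d w t hw ρ hρ.1).continuousWithinAt

lemma I_hasDeriv (hw : ∀ ρ ∈ Set.Ici (0:ℝ), ContinuousAt (fun ρ' => w ρ' t) ρ)
    (r : ℝ) (hr : 0 < r) :
    HasDerivAt (fun x => ∫ ρ in (0:ℝ)..x, ρ ^ (d-1) * w ρ t) (r ^ (d-1) * w r t) r := by
  apply intervalIntegral.integral_hasDerivAt_right (integrand_intable d w t hw r hr.le)
  · have hcont : ContinuousOn (fun ρ' => ρ' ^ (d-1) * w ρ' t) (Set.Ioi (0:ℝ)) :=
      fun ρ hρ => (integrand_cont d w t hw ρ (Set.mem_Ici.mpr (le_of_lt hρ))).continuousWithinAt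
    exact hcont.stronglyMeasurableAtFilter isOpen_Ioi r hr
  · exact integrand_cont d w t hw r hr.le

lemma vrad_hasDeriv (hd : 5 ≤ d) (hw : ∀ ρ ∈ Set.Ici (0:ℝ), ContinuousAt (fun ρ' => w ρ' t) ρ)
    (r : ℝ) (hr : 0 < r) :
    HasDerivAt (fun ρ => vrad d w ρ t)
      (((d:ℝ)-1) * r^(-(d:ℤ)) * (∫ ρ in (0:ℝ)..r, ρ ^ (d-1) * w ρ t) - w r t) r := by
  have hI := I_hasDeriv d w t hw r hr
  have hz := (hasDerivAt_zpow ((1:ℤ) - (d:ℤ)) r (Or.inl hr.ne')).neg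
  have hprod := hz.mul hI
  have heq : (fun ρ => vrad d w ρ t)
      = fun ρ => -(ρ ^ ((1:ℤ) - (d:ℤ))) * ∫ ρ' in (0:ℝ)..ρ, ρ' ^ (d-1) * w ρ' t := rfl
  rw [heq]
  refine hprod.congr_deriv ?_
  have hd1 : ((1:ℤ) - (d:ℤ) - 1) = -(d:ℤ) := by ring
  rw [hd1]
  have hpow : r ^ ((1:ℤ) - (d:ℤ)) * r ^ (d-1) = 1 := by
    have : (r : ℝ) ^ (d-1) = r ^ (((d:ℤ)) - 1) := by
      rw [← zpow_natCast]
      congr 1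
      omega
    rw [this, ← zpow_add₀ hr.ne']
    norm_num
  have hterm : -(r ^ ((1:ℤ) - (d:ℤ))) * (r ^ (d-1) * w r t) = -(w r t) := by
    rw [neg_mul, ← mul_assoc, hpow, one_mul]
  rw [Pi.neg_apply, hterm]
  push_cast
  ring

lemma vradR_hasDeriv (hd : 5 ≤ d) (hw : ∀ ρ ∈ Set.Ici (0:ℝ), ContinuousAt (fun ρ' => w ρ' t) ρ)
    (hwd : ∀ ρ ∈ Set.Ici (0:ℝ), DifferentiableAt ℝ (fun ρ' => w ρ' t) ρ)
    (r : ℝ) (hr : 0 < r) :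
    HasDerivAt (fun ρ => pderivR (vrad d w) ρ t)
      (-((d:ℝ)*((d:ℝ)-1)) * r^(-(d:ℤ)-1) * (∫ ρ in (0:ℝ)..r, ρ ^ (d-1) * w ρ t)
        + ((d:ℝ)-1) * w r t / r - pderivR w r t) r := by
  have hI := I_hasDeriv d w t hw r hr
  have hzp := hasDerivAt_zpow (-(d:ℤ)) r (Or.inl hr.ne')
  have hwdr : HasDerivAt (fun ρ => w ρ t) (pderivR w r t) r := (hwd r hr.le).hasDerivAt
  have hG := (((hzp.const_mul ((d:ℝ)-1)).mul hI).sub hwdr)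
  have hevent : (fun ρ => pderivR (vrad d w) ρ t)
      =ᶠ[nhds r] (fun ρ => ((d:ℝ)-1) * ρ^(-(d:ℤ)) * (∫ ρ' in (0:ℝ)..ρ, ρ' ^ (d-1) * w ρ' t)
        - w ρ t) := by
    filter_upwards [Ioi_mem_nhds hr] with ρ hρ
    exact (vrad_hasDeriv d w t hd hw ρ hρ).deriv
  have := hG.congr_of_eventuallyEq hevent
  refine this.congr_deriv ?_
  have hpow : r ^ (-(d:ℤ)) * r ^ (d-1) = r⁻¹ := by
    have h2 : (r : ℝ) ^ (d-1) = r ^ (((d:ℤ)) - 1) := by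
      rw [← zpow_natCast]; congr 1; omega
    rw [h2, ← zpow_add₀ hr.ne']
    have h4 : (-(d:ℤ) + ((d:ℤ)-1)) = -1 := by ring
    rw [h4, zpow_neg_one]
  have h3 : (((d:ℝ)-1) * r^(-(d:ℤ))) * (r ^ (d-1) * w r t) = ((d:ℝ)-1) * w r t / r := by
    rw [div_eq_mul_inv, ← hpow]; ring
  rw [h3]
  push_cast
  ring

lemma comb_identity (r Iv wv wtv : ℝ) (hr : 0 < r) (hd : 5 ≤ d) :
    (-((d:ℝ)*((d:ℝ)-1)) * r^(-(d:ℤ)-1) * Iv + ((d:ℝ)-1) * wv / r - wtv)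
      + ((d:ℝ)-1)/r * (((d:ℝ)-1) * r^(-(d:ℤ)) * Iv - wv)
      - ((d:ℝ)-1)/r^2 * (-(r ^ ((1:ℤ)-(d:ℤ))) * Iv) = -wtv := by
  have h1 : r ^ (-(d:ℤ)-1) = r^(-(d:ℤ)) / r := by
    rw [zpow_sub₀ hr.ne', zpow_one]
  have h2 : r ^ ((1:ℤ)-(d:ℤ)) = r * r^(-(d:ℤ)) := by
    rw [sub_eq_add_neg, zpow_add₀ hr.ne', zpow_one]
  rw [h1, h2]
  field_simp
  ring

end

lemma arithA (dr Cb E H m : ℝ) (hE : 0 < E) (hEH : E ≤ H) (hm : 0 < m) (hd : 0 ≤ dr)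
    (h : (2*dr+(dr+4)*Cb)*H + ((dr+2)*Cb+1)*m
      ≤ 2*E + (2*(dr-1)*E + 2*Cb*H) + (dr+1)*Cb*(H+m) + (H+m)*Cb) : False := by
  nlinarith [mul_le_mul_of_nonneg_left hEH (by linarith : (0:ℝ) ≤ 2*dr)]

lemma arithB (dr Cb E H m : ℝ) (hE : 0 < E) (hEH : E ≤ H) (hH : 0 < H) (hm : 0 < m)
    (hCb : 1 ≤ Cb) (hd : 0 ≤ dr)
    (h : (2*dr+(dr+4)*Cb)*H + ((dr+2)*Cb+1)*m ≤ 2*E + 2*(dr-1)*E + (H+m)) : False := by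
  nlinarith [mul_le_mul_of_nonneg_left hEH (by linarith : (0:ℝ) ≤ 2*dr),
    mul_nonneg (mul_nonneg hd (by linarith : (0:ℝ) ≤ Cb)) hH.le,
    mul_nonneg (mul_nonneg hd (by linarith : (0:ℝ) ≤ Cb)) hm.le,
    mul_nonneg (by linarith : (0:ℝ) ≤ Cb) hm.le,
    mul_le_mul_of_nonneg_right hCb hH.le]

/-- Preservation of radial monotonicity: the `r`-derivatives
`ũ = ∂_r u`, `w̃ = ∂_r w` stay nonpositive if they are nonpositive initially. -/
theorem stmt7 (d : ℕ) (hd : 5 ≤ d) (T : ℝ) (hT : 0 < T)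
    (u w : ℝ → ℝ → ℝ)
    (h_nonneg : ∀ r ∈ Set.Ici (0 : ℝ), ∀ t ∈ Set.Ico (0 : ℝ) T, 0 ≤ u r t ∧ 0 ≤ w r t)
    (h_bdd : ∀ T₀ < T, ∃ Cb : ℝ, ∀ r ∈ Set.Ici (0 : ℝ), ∀ t ∈ Set.Icc 0 T₀,
      |u r t| ≤ Cb ∧ |w r t| ≤ Cb)
    (h_diffr : ∀ r ∈ Set.Ici (0 : ℝ), ∀ t ∈ Set.Ico (0 : ℝ) T,
      DifferentiableAt ℝ (fun ρ => u ρ t) r ∧ DifferentiableAt ℝ (fun ρ => w ρ t) r)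
    (htld_cont : ContinuousOn (fun p : ℝ × ℝ => pderivR u p.1 p.2)
        (Set.Ici 0 ×ˢ Set.Ico 0 T) ∧
      ContinuousOn (fun p : ℝ × ℝ => pderivR w p.1 p.2) (Set.Ici 0 ×ˢ Set.Ico 0 T))
    (htld_bdd : ∀ T₀ < T, ∃ Cb : ℝ, ∀ r ∈ Set.Ici (0 : ℝ), ∀ t ∈ Set.Icc 0 T₀,
      |pderivR u r t| ≤ Cb ∧ |pderivR w r t| ≤ Cb)
    (htld_smooth : SmoothC21 (pderivR u) T ∧ SmoothC21 (pderivR w) T)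
    (h_zero : ∀ t ∈ Set.Ico (0 : ℝ) T, pderivR u 0 t = 0 ∧ pderivR w 0 t = 0)
    (hpde1 : ∀ r ∈ Set.Ioi (0 : ℝ), ∀ t ∈ Set.Ioo (0 : ℝ) T,
      pderivT (pderivR u) r t
        = pderivRR (pderivR u) r t
          + (((d : ℝ) - 1) / r - vrad d w r t) * pderivR (pderivR u) r t
          + (-(((d : ℝ) - 1) / r ^ 2) - 2 * pderivR (vrad d w) r t
              - ((d : ℝ) - 1) / r * vrad d w r t) * pderivR u r t
          - (pderivRR (vrad d w) r t + ((d : ℝ) - 1) / r * pderivR (vrad d w) r t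
              - ((d : ℝ) - 1) / r ^ 2 * vrad d w r t) * u r t)
    (hpde2 : ∀ r ∈ Set.Ioi (0 : ℝ), ∀ t ∈ Set.Ioo (0 : ℝ) T,
      pderivT (pderivR w) r t
        = pderivRR (pderivR w) r t + ((d : ℝ) - 1) / r * pderivR (pderivR w) r t
          - ((d : ℝ) - 1) / r ^ 2 * pderivR w r t + pderivR u r t)
    (hinit : ∀ r ∈ Set.Ici (0 : ℝ), pderivR u r 0 ≤ 0 ∧ pderivR w r 0 ≤ 0) :
    ∀ r ∈ Set.Ici (0 : ℝ), ∀ t ∈ Set.Ico (0 : ℝ) T,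
      pderivR u r t ≤ 0 ∧ pderivR w r t ≤ 0 := by
  have key : ∀ T₀, 0 < T₀ → T₀ < T → ∃ lam : ℝ, ∀ ε : ℝ, 0 < ε → ∀ r ∈ Set.Ici (0:ℝ),
      ∀ t ∈ Set.Icc (0:ℝ) T₀,
      pderivR u r t ≤ ε * Real.exp (lam * t) * (1 + r^2) ∧
      pderivR w r t ≤ ε * Real.exp (lam * t) * (1 + r^2) := by
    intro T₀ hT₀1 hT₀2
    obtain ⟨C1, hC1⟩ := h_bdd T₀ hT₀2
    obtain ⟨C2, hC2⟩ := htld_bdd T₀ hT₀2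
    set Cb := max 1 (max C1 C2) with hCbdef
    have hCb1 : (1:ℝ) ≤ Cb := le_max_left _ _
    have hCb0 : (0:ℝ) < Cb := by linarith
    have hd5 : (5:ℝ) ≤ (d:ℝ) := by exact_mod_cast hd
    have hd0 : (0:ℝ) ≤ (d:ℝ) := by linarith
    have hbd : ∀ r ∈ Set.Ici (0:ℝ), ∀ s ∈ Set.Icc (0:ℝ) T₀,
        |u r s| ≤ Cb ∧ |w r s| ≤ Cb ∧ |pderivR u r s| ≤ Cb ∧ |pderivR w r s| ≤ Cb := by
      intro r hr s hs
      have m1 : C1 ≤ Cb := le_trans (le_max_left _ _) (le_max_right _ _)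
      have m2 : C2 ≤ Cb := le_trans (le_max_right _ _) (le_max_right _ _)
      exact ⟨(hC1 r hr s hs).1.trans m1, (hC1 r hr s hs).2.trans m1,
        (hC2 r hr s hs).1.trans m2, (hC2 r hr s hs).2.trans m2⟩
    refine ⟨2*(d:ℝ) + ((d:ℝ)+4)*Cb, ?_⟩
    set lam : ℝ := 2*(d:ℝ) + ((d:ℝ)+4)*Cb with hlamdef
    set mu : ℝ := ((d:ℝ)+2)*Cb + 1 with hmudef
    have hlam0 : 0 ≤ lam := by
      rw [hlamdef]
      nlinarith [mul_nonneg hd0 hCb0.le]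
    intro ε hε
    set R := Real.sqrt (Cb/ε) with hRdef
    have hR0 : 0 ≤ R := Real.sqrt_nonneg _
    have hR2 : R^2 = Cb/ε := Real.sq_sqrt (by positivity)
    have hεR2 : ε * R^2 = Cb := by rw [hR2]; field_simp
    -- bound valid outside the compact region
    have houter : ∀ r' t', R < r' → 0 ≤ t' → t' ≤ T₀ →
        pderivR u r' t' ≤ ε * Real.exp (lam*t') * (1+r'^2) ∧
        pderivR w r' t' ≤ ε * Real.exp (lam*t') * (1+r'^2) := by
      intro r' t' hrR ht0' htT₀'
      have hr0 : (0:ℝ) ≤ r' := le_trans hR0 hrR.le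
      have hbds := hbd r' hr0 t' ⟨ht0', htT₀'⟩
      have hexp1 : 1 ≤ Real.exp (lam*t') := Real.one_le_exp (mul_nonneg hlam0 ht0')
      have hr2 : R^2 ≤ r'^2 := pow_le_pow_left₀ hR0 hrR.le 2
      have hstep : Cb ≤ ε * (1+r'^2) := by
        nlinarith only [hεR2, hr2, hε, mul_le_mul_of_nonneg_left hr2 hε.le]
      have hpos' : (0:ℝ) ≤ ε * (1+r'^2) := by positivity
      have h2 : ε * (1+r'^2) ≤ ε * Real.exp (lam*t') * (1+r'^2) := by
        nlinarith only [hexp1, hpos']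
      constructor
      · calc pderivR u r' t' ≤ |pderivR u r' t'| := le_abs_self _
          _ ≤ Cb := hbds.2.2.1
          _ ≤ ε * (1+r'^2) := hstep
          _ ≤ _ := h2
      · calc pderivR w r' t' ≤ |pderivR w r' t'| := le_abs_self _
          _ ≤ Cb := hbds.2.2.2
          _ ≤ ε * (1+r'^2) := hstep
          _ ≤ _ := h2
    set K : Set (ℝ × ℝ) := Set.Icc (0:ℝ) R ×ˢ Set.Icc (0:ℝ) T₀ with hKdef
    have hKsub : K ⊆ Set.Ici 0 ×ˢ Set.Ico 0 T := by
      rintro ⟨a,b⟩ ⟨ha, hb⟩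
      exact ⟨ha.1, hb.1, lt_of_le_of_lt hb.2 hT₀2⟩
    set F : ℝ×ℝ → ℝ := fun p =>
      (max (pderivR u p.1 p.2) (pderivR w p.1 p.2) - ε * Real.exp (lam*p.2) * (1+p.1^2))
        * Real.exp (-(mu*p.2)) with hFdef
    have hFcont : ContinuousOn F K := by
      apply ContinuousOn.mul
      · apply ContinuousOn.sub
        · exact fun x hx => ((htld_cont.1.mono hKsub) x hx).max ((htld_cont.2.mono hKsub) x hx)
        · fun_prop
      · fun_prop
    have hKcomp : IsCompact K := IsCompact.prod isCompact_Icc isCompact_Icc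
    have hKne : K.Nonempty := ⟨((0:ℝ),(0:ℝ)), Set.mem_prod.mpr
      ⟨⟨le_refl _, hR0⟩, ⟨le_refl _, hT₀1.le⟩⟩⟩
    obtain ⟨p₀, hp₀K, hp₀max⟩ := hKcomp.exists_isMaxOn hKne hFcont
    obtain ⟨r₀, t₀⟩ := p₀
    -- the maximum of F on K is nonpositive
    have hM : F (r₀, t₀) ≤ 0 := by
      by_contra hM'
      push_neg at hM'
      have hr₀K : r₀ ∈ Set.Icc (0:ℝ) R := hp₀K.1
      have ht₀K : t₀ ∈ Set.Icc (0:ℝ) T₀ := hp₀K.2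
      have ht₀T : t₀ < T := lt_of_le_of_lt ht₀K.2 hT₀2
      set E : ℝ := ε * Real.exp (lam*t₀) with hE
      have hEpos : 0 < E := by rw [hE]; positivity
      have hexppos : 0 < Real.exp (-(mu*t₀)) := Real.exp_pos _
      have hFeval : F (r₀,t₀) = (max (pderivR u r₀ t₀) (pderivR w r₀ t₀)
          - E*(1+r₀^2)) * Real.exp (-(mu*t₀)) := rfl
      set m : ℝ := max (pderivR u r₀ t₀) (pderivR w r₀ t₀) - E*(1+r₀^2) with hm
      have hmpos : 0 < m := by
        by_contra hcon
        push_neg at hcon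
        rw [hFeval] at hM'
        have h1 : m * Real.exp (-(mu*t₀)) ≤ 0 :=
          mul_nonpos_iff.mpr (Or.inr ⟨hcon, hexppos.le⟩)
        linarith only [hM', h1]
      have hr₀pos : 0 < r₀ := by
        rcases hr₀K.1.lt_or_eq with h | h
        · exact h
        · exfalso
          have hz := h_zero t₀ ⟨ht₀K.1, ht₀T⟩
          rw [← h] at hm
          rw [hz.1, hz.2] at hm
          norm_num at hm
          linarith only [hmpos, hEpos, hm]
      have ht₀pos : 0 < t₀ := by
        rcases ht₀K.1.lt_or_eq with h | h
        · exact h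
        · exfalso
          have hz := hinit r₀ hr₀K.1
          rw [← h] at hm
          have hmax0 : max (pderivR u r₀ 0) (pderivR w r₀ 0) ≤ 0 := max_le hz.1 hz.2
          have hq : 0 < E*(1+r₀^2) := by nlinarith only [hEpos, sq_nonneg r₀]
          linarith only [hmpos, hmax0, hq, hm]
      have ht₀Ico : t₀ ∈ Set.Ico (0:ℝ) T := ⟨ht₀K.1, ht₀T⟩
      have hbds₀ := hbd r₀ hr₀pos.le t₀ ht₀K
      have hMXle : max (pderivR u r₀ t₀) (pderivR w r₀ t₀) ≤ Cb :=
        max_le ((le_abs_self _).trans hbds₀.2.2.1) ((le_abs_self _).trans hbds₀.2.2.2)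
      have hexplam : 1 ≤ Real.exp (lam*t₀) := Real.one_le_exp (mul_nonneg hlam0 ht₀K.1)
      have hr₀R : r₀ < R := by
        have h1 : ε*(1+r₀^2) ≤ E*(1+r₀^2) := by
          rw [hE]
          nlinarith only [mul_nonneg (mul_nonneg (sub_nonneg.mpr hexplam) hε.le)
            (by positivity : (0:ℝ) ≤ 1+r₀^2)]
        have hεsmall : ε*(1+r₀^2) < Cb := by
          linarith only [h1, hmpos, hMXle, hm]
        have hsq : r₀^2 < R^2 := by nlinarith only [hεsmall, hεR2, hε]
        by_contra hcon
        push_neg at hcon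
        have := pow_le_pow_left₀ hR0 hcon 2
        linarith only [this, hsq]
      -- the space comparison: everything on the slice t = t₀ lies below m
      have hsup : ∀ ρ ∈ Set.Ioi (0:ℝ),
          pderivR u ρ t₀ - ε*Real.exp (lam*t₀)*(1+ρ^2) ≤ m ∧
          pderivR w ρ t₀ - ε*Real.exp (lam*t₀)*(1+ρ^2) ≤ m := by
        intro ρ hρ
        rcases le_or_gt ρ R with hle | hgt
        · have hKρ : ((ρ, t₀) : ℝ × ℝ) ∈ K := Set.mem_prod.mpr ⟨⟨le_of_lt hρ, hle⟩, ht₀K⟩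
          have hF : F (ρ, t₀) ≤ F (r₀, t₀) := hp₀max hKρ
          have hFevalρ : F (ρ,t₀) = (max (pderivR u ρ t₀) (pderivR w ρ t₀)
              - ε*Real.exp (lam*t₀)*(1+ρ^2)) * Real.exp (-(mu*t₀)) := rfl
          rw [hFevalρ, hFeval] at hF
          have hstep : max (pderivR u ρ t₀) (pderivR w ρ t₀) - ε*Real.exp (lam*t₀)*(1+ρ^2)
              ≤ m := by
            rw [hm]
            exact le_of_mul_le_mul_right hF hexppos
          constructor
          · linarith only [hstep, le_max_left (pderivR u ρ t₀) (pderivR w ρ t₀)]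
          · linarith only [hstep, le_max_right (pderivR u ρ t₀) (pderivR w ρ t₀)]
        · have hout := houter ρ t₀ hgt ht₀K.1 ht₀K.2
          constructor
          · linarith only [hmpos, hout.1]
          · linarith only [hmpos, hout.2]
      have hsupr₀ := hsup r₀ hr₀pos
      -- time comparison
      have htfact : ∀ g : ℝ → ℝ → ℝ,
          (∀ a b : ℝ, g a b ≤ max (pderivR u a b) (pderivR w a b)) →
          ∀ s ∈ Set.Ioo (0:ℝ) t₀,
          (g r₀ s - ε*Real.exp (lam*s)*(1+r₀^2)) * Real.exp (-(mu*s))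
            ≤ m * Real.exp (-(mu*t₀)) := by
        intro g hg s hs
        have hKs : ((r₀, s) : ℝ × ℝ) ∈ K :=
          Set.mem_prod.mpr ⟨hr₀K, ⟨hs.1.le, le_trans hs.2.le ht₀K.2⟩⟩
        have hF : F (r₀, s) ≤ F (r₀, t₀) := hp₀max hKs
        have hFevals : F (r₀,s) = (max (pderivR u r₀ s) (pderivR w r₀ s)
            - ε*Real.exp (lam*s)*(1+r₀^2)) * Real.exp (-(mu*s)) := rfl
        rw [hFevals, hFeval] at hF
        have hexps : 0 < Real.exp (-(mu*s)) := Real.exp_pos _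
        have hcomp : g r₀ s ≤ max (pderivR u r₀ s) (pderivR w r₀ s) := hg r₀ s
        have h1 : (g r₀ s - ε*Real.exp (lam*s)*(1+r₀^2)) * Real.exp (-(mu*s))
            ≤ (max (pderivR u r₀ s) (pderivR w r₀ s) - ε*Real.exp (lam*s)*(1+r₀^2))
              * Real.exp (-(mu*s)) := by
          apply mul_le_mul_of_nonneg_right _ hexps.le
          linarith
        calc _ ≤ _ := h1
        _ ≤ (max (pderivR u r₀ t₀) (pderivR w r₀ t₀) - E*(1+r₀^2)) * Real.exp (-(mu*t₀)) := hF
        _ = m * Real.exp (-(mu*t₀)) := by rw [hm]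
      -- vrad calculus at (r₀, t₀)
      have hwc : ∀ ρ ∈ Set.Ici (0:ℝ), ContinuousAt (fun ρ' => w ρ' t₀) ρ :=
        fun ρ hρ => ((h_diffr ρ hρ t₀ ht₀Ico).2).continuousAt
      have hwdiff : ∀ ρ ∈ Set.Ici (0:ℝ), DifferentiableAt ℝ (fun ρ' => w ρ' t₀) ρ :=
        fun ρ hρ => (h_diffr ρ hρ t₀ ht₀Ico).2
      set Iv : ℝ := ∫ ρ in (0:ℝ)..r₀, ρ ^ (d-1) * w ρ t₀ with hIvdef
      have hIv0 : 0 ≤ Iv := by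
        rw [hIvdef]
        apply intervalIntegral.integral_nonneg hr₀pos.le
        intro ρ hρ
        exact mul_nonneg (pow_nonneg hρ.1 _) (h_nonneg ρ hρ.1 t₀ ht₀Ico).2
      have hIvle : Iv ≤ Cb * r₀^d / (d:ℝ) := by
        have hint1 := integrand_intable d w t₀ hwc r₀ hr₀pos.le
        have hint2 : IntervalIntegrable (fun ρ : ℝ => Cb * ρ^(d-1))
            MeasureTheory.volume 0 r₀ :=
          (continuous_const.mul (continuous_pow _)).intervalIntegrable _ _
        have hmono := intervalIntegral.integral_mono_on hr₀pos.le hint1 hint2 (fun ρ hρ => by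
          have hWb := (hbd ρ hρ.1 t₀ ht₀K).2.1
          have hw' : w ρ t₀ ≤ Cb := (le_abs_self _).trans hWb
          have hρp : (0:ℝ) ≤ ρ^(d-1) := pow_nonneg hρ.1 _
          nlinarith only [mul_le_mul_of_nonneg_left hw' hρp])
        have hcb : (∫ ρ in (0:ℝ)..r₀, Cb * ρ^(d-1)) = Cb * r₀^d / (d:ℝ) := by
          rw [intervalIntegral.integral_const_mul, integral_pow]
          rw [show d - 1 + 1 = d from by omega]
          rw [zero_pow (show d ≠ 0 from by omega)]
          have hcast : ((d-1 : ℕ) : ℝ) + 1 = (d:ℝ) := by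
            rw [Nat.cast_sub (by omega : 1 ≤ d)]
            push_cast
            ring
          rw [hcast]
          ring
        rw [hIvdef]
        calc (∫ ρ in (0:ℝ)..r₀, ρ ^ (d-1) * w ρ t₀) ≤ ∫ ρ in (0:ℝ)..r₀, Cb * ρ^(d-1) := hmono
        _ = Cb * r₀^d / (d:ℝ) := hcb
      have hvd : pderivR (vrad d w) r₀ t₀ = ((d:ℝ)-1) * r₀^(-(d:ℤ)) * Iv - w r₀ t₀ :=
        (vrad_hasDeriv d w t₀ hd hwc r₀ hr₀pos).deriv
      have hvdd : pderivRR (vrad d w) r₀ t₀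
          = -((d:ℝ)*((d:ℝ)-1)) * r₀^(-(d:ℤ)-1) * Iv + ((d:ℝ)-1) * w r₀ t₀ / r₀
            - pderivR w r₀ t₀ :=
        (vradR_hasDeriv d w t₀ hd hwc hwdiff r₀ hr₀pos).deriv
      have hvval : vrad d w r₀ t₀ = -(r₀ ^ ((1:ℤ)-(d:ℤ))) * Iv := rfl
      have hcomb : pderivRR (vrad d w) r₀ t₀ + ((d:ℝ)-1)/r₀ * pderivR (vrad d w) r₀ t₀
          - ((d:ℝ)-1)/r₀^2 * vrad d w r₀ t₀ = -(pderivR w r₀ t₀) := by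
        rw [hvd, hvdd, hvval]
        exact comb_identity d r₀ Iv (w r₀ t₀) (pderivR w r₀ t₀) hr₀pos hd
      have hzp1 : (0:ℝ) < r₀ ^ ((1:ℤ)-(d:ℤ)) := zpow_pos hr₀pos _
      have hzp2 : (0:ℝ) < r₀ ^ (-(d:ℤ)) := zpow_pos hr₀pos _
      have hzpmul : r₀ ^ ((1:ℤ)-(d:ℤ)) * r₀^(d:ℕ) = r₀ := by
        rw [← zpow_natCast r₀ d, ← zpow_add₀ hr₀pos.ne']
        norm_num
      have hvneg : vrad d w r₀ t₀ ≤ 0 := by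
        rw [hvval]
        have := mul_nonneg hzp1.le hIv0
        linarith only [this]
      have hvlb : -(vrad d w r₀ t₀) ≤ Cb * r₀ := by
        have step := mul_le_mul_of_nonneg_left hIvle hzp1.le
        have hiden : r₀^((1:ℤ)-(d:ℤ)) * (Cb * r₀^(d:ℕ) / (d:ℝ))
            = Cb * (r₀^((1:ℤ)-(d:ℤ)) * r₀^(d:ℕ)) / (d:ℝ) := by ring
        rw [hiden, hzpmul] at step
        have hfin : Cb * r₀ / (d:ℝ) ≤ Cb * r₀ := by
          apply div_le_self (by positivity) (by linarith)
        rw [hvval, neg_mul, neg_neg]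
        calc r₀^((1:ℤ)-(d:ℤ)) * Iv ≤ Cb * r₀ / (d:ℝ) := step
        _ ≤ Cb * r₀ := hfin
      have hwCb : |w r₀ t₀| ≤ Cb := hbds₀.2.1
      have hvrlb : -Cb ≤ pderivR (vrad d w) r₀ t₀ := by
        rw [hvd]
        have h1 : 0 ≤ ((d:ℝ)-1) * r₀^(-(d:ℤ)) * Iv := by
          apply mul_nonneg (mul_nonneg (by linarith) hzp2.le) hIv0
        have h2 := (abs_le.mp hwCb).2
        linarith only [h1, h2]
      -- good, now the case analysis
      have hu0 : 0 ≤ u r₀ t₀ := (h_nonneg r₀ hr₀pos.le t₀ ht₀Ico).1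
      have huC : u r₀ t₀ ≤ Cb := (le_abs_self _).trans hbds₀.1
      have hEleH : E ≤ E*(1+r₀^2) := by nlinarith only [hEpos, sq_nonneg r₀]
      have hdEH : 2*(d:ℝ)*E ≤ 2*(d:ℝ)*(E*(1+r₀^2)) := by
        nlinarith only [mul_nonneg (mul_nonneg hd0 hEpos.le) (sq_nonneg r₀)]
      have hH : 0 < E*(1+r₀^2) := by nlinarith only [hEpos, sq_nonneg r₀]
      clear_value E m Iv Cb lam mu R K F
      rcases max_choice (pderivR u r₀ t₀) (pderivR w r₀ t₀) with hA | hB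
      · -- case A : the maximum component is ũ
        have hequ : pderivR u r₀ t₀ - ε*Real.exp (lam*t₀)*(1+r₀^2) = m := by
          rw [hm, hA, hE]
        obtain ⟨e1, e2, e3⟩ := max_point_facts (pderivR u) T lam mu ε r₀ t₀ m
          htld_smooth.1 hr₀pos ht₀pos ht₀T (fun ρ hρ => (hsup ρ hρ).1) hequ
          (htfact (pderivR u) (fun a b => le_max_left _ _))
        have hpde := hpde1 r₀ hr₀pos t₀ ⟨ht₀pos, ht₀T⟩
        rw [hcomb, e1] at hpde
        have hXeq : pderivR u r₀ t₀ = E*(1+r₀^2) + m := by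
          rw [hE]; linarith [hequ]
        rw [hXeq] at hpde
        have hwtle : pderivR w r₀ t₀ ≤ E*(1+r₀^2) + m := by
          have := hsupr₀.2
          rw [hE]; linarith
        -- bounds of the individual terms
        have hA1 : pderivRR (pderivR u) r₀ t₀ ≤ 2*E := by
          rw [hE]; exact e2
        have hvlb' : -(vrad d w r₀ t₀) ≤ Cb * r₀ := hvlb
        have hA2 : ((d:ℝ)-1)/r₀ * (ε*Real.exp (lam*t₀)*(2*r₀)) = 2*((d:ℝ)-1)*E := by
          rw [hE]; field_simp
        have hA3 : (-(vrad d w r₀ t₀)) * (ε*Real.exp (lam*t₀)*(2*r₀)) ≤ 2*Cb*(E*(1+r₀^2)) := by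
          have h2rE : (0:ℝ) ≤ ε*Real.exp (lam*t₀)*(2*r₀) := by positivity
          calc (-(vrad d w r₀ t₀)) * (ε*Real.exp (lam*t₀)*(2*r₀))
              ≤ (Cb*r₀) * (ε*Real.exp (lam*t₀)*(2*r₀)) :=
            mul_le_mul_of_nonneg_right hvlb' h2rE
          _ ≤ 2*Cb*(E*(1+r₀^2)) := by
            rw [hE]
            nlinarith only [mul_nonneg hCb0.le (mul_pos hε (Real.exp_pos (lam*t₀))).le]
        have hterm2 : (((d:ℝ)-1)/r₀ - vrad d w r₀ t₀) * (ε*Real.exp (lam*t₀)*(2*r₀))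
            ≤ 2*((d:ℝ)-1)*E + 2*Cb*(E*(1+r₀^2)) := by
          have hsplit : (((d:ℝ)-1)/r₀ - vrad d w r₀ t₀) * (ε*Real.exp (lam*t₀)*(2*r₀))
              = ((d:ℝ)-1)/r₀ * (ε*Real.exp (lam*t₀)*(2*r₀))
                + (-(vrad d w r₀ t₀)) * (ε*Real.exp (lam*t₀)*(2*r₀)) := by ring
          rw [hsplit, hA2]
          linarith [hA3]
        have hcoef : (-(((d:ℝ)-1)/r₀^2) - 2*pderivR (vrad d w) r₀ t₀
            - ((d:ℝ)-1)/r₀ * vrad d w r₀ t₀) ≤ ((d:ℝ)+1)*Cb := by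
          have p1 : 0 ≤ ((d:ℝ)-1)/r₀^2 := div_nonneg (by linarith) (sq_nonneg r₀)
          have p2 : -(2*pderivR (vrad d w) r₀ t₀) ≤ 2*Cb := by linarith [hvrlb]
          have p4 : ((d:ℝ)-1)/r₀ * (-(vrad d w r₀ t₀)) ≤ ((d:ℝ)-1)/r₀ * (Cb*r₀) :=
            mul_le_mul_of_nonneg_left hvlb' (div_nonneg (by linarith) hr₀pos.le)
          have p5 : ((d:ℝ)-1)/r₀ * (Cb*r₀) = ((d:ℝ)-1)*Cb := by field_simp
          have p6 : 0 ≤ (d:ℝ)*Cb := mul_nonneg hd0 hCb0.le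
          linarith only [p1, p2, p4, p5, p6]
        have hcoefX : (-(((d:ℝ)-1)/r₀^2) - 2*pderivR (vrad d w) r₀ t₀
            - ((d:ℝ)-1)/r₀ * vrad d w r₀ t₀) * (E*(1+r₀^2) + m)
            ≤ ((d:ℝ)+1)*Cb * (E*(1+r₀^2) + m) :=
          mul_le_mul_of_nonneg_right hcoef (by linarith only [hH, hmpos])
        have hq1 : pderivR w r₀ t₀ * u r₀ t₀ ≤ (E*(1+r₀^2) + m) * u r₀ t₀ :=
          mul_le_mul_of_nonneg_right hwtle hu0
        have hq2 : (E*(1+r₀^2) + m) * u r₀ t₀ ≤ (E*(1+r₀^2) + m) * Cb :=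
          mul_le_mul_of_nonneg_left huC (by linarith only [hH, hmpos])
        have hfinal1 : pderivT (pderivR u) r₀ t₀
            ≤ 2*E + (2*((d:ℝ)-1)*E + 2*Cb*(E*(1+r₀^2)))
              + ((d:ℝ)+1)*Cb * (E*(1+r₀^2) + m) + (E*(1+r₀^2) + m) * Cb := by
          rw [hpde]
          linarith only [hA1, hterm2, hcoefX, hq1, hq2]
        have he3' : lam*(E*(1+r₀^2)) + mu*m ≤ pderivT (pderivR u) r₀ t₀ := by
          rw [hE]; exact e3
        rw [hlamdef, hmudef] at he3'
        have hcontra : (2*(d:ℝ)+((d:ℝ)+4)*Cb)*(E*(1+r₀^2)) + (((d:ℝ)+2)*Cb+1)*m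
            ≤ 2*E + (2*((d:ℝ)-1)*E + 2*Cb*(E*(1+r₀^2)))
              + ((d:ℝ)+1)*Cb*(E*(1+r₀^2)+m) + (E*(1+r₀^2)+m)*Cb := by
          linarith only [he3', hfinal1]
        exact arithA (d:ℝ) Cb E (E*(1+r₀^2)) m hEpos hEleH hmpos hd0 hcontra
      · -- case B : the maximum component is w̃
        have heqw : pderivR w r₀ t₀ - ε*Real.exp (lam*t₀)*(1+r₀^2) = m := by
          rw [hm, hB, hE]
        obtain ⟨e1, e2, e3⟩ := max_point_facts (pderivR w) T lam mu ε r₀ t₀ m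
          htld_smooth.2 hr₀pos ht₀pos ht₀T (fun ρ hρ => (hsup ρ hρ).2) heqw
          (htfact (pderivR w) (fun a b => le_max_right _ _))
        have hpde := hpde2 r₀ hr₀pos t₀ ⟨ht₀pos, ht₀T⟩
        rw [e1] at hpde
        have hXeq : pderivR w r₀ t₀ = E*(1+r₀^2) + m := by
          rw [hE]; linarith [heqw]
        rw [hXeq] at hpde
        have hutle : pderivR u r₀ t₀ ≤ E*(1+r₀^2) + m := by
          have := hsupr₀.1
          rw [hE]; linarith
        have hB1 : pderivRR (pderivR w) r₀ t₀ ≤ 2*E := by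
          rw [hE]; exact e2
        have hB2 : ((d:ℝ)-1)/r₀ * (ε*Real.exp (lam*t₀)*(2*r₀)) = 2*((d:ℝ)-1)*E := by
          rw [hE]; field_simp
        have hB3 : ((d:ℝ)-1)/r₀^2 * (E*(1+r₀^2) + m) ≥ 0 := by
          apply mul_nonneg (div_nonneg (by linarith only [hd5]) (sq_nonneg r₀))
            (by linarith only [hH, hmpos])
        have hfinal1 : pderivT (pderivR w) r₀ t₀
            ≤ 2*E + 2*((d:ℝ)-1)*E + (E*(1+r₀^2) + m) := by
          rw [hpde, hB2]
          linarith only [hB1, hB3, hutle]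
        have he3' : lam*(E*(1+r₀^2)) + mu*m ≤ pderivT (pderivR w) r₀ t₀ := by
          rw [hE]; exact e3
        rw [hlamdef, hmudef] at he3'
        have hcontra : (2*(d:ℝ)+((d:ℝ)+4)*Cb)*(E*(1+r₀^2)) + (((d:ℝ)+2)*Cb+1)*m
            ≤ 2*E + 2*((d:ℝ)-1)*E + (E*(1+r₀^2)+m) := by
          linarith only [he3', hfinal1]
        exact arithB (d:ℝ) Cb E (E*(1+r₀^2)) m hEpos hEleH hH hmpos hCb1 hd0 hcontra
    -- conclude from hM
    intro r hr t htmem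
    rcases le_or_gt r R with hrR | hrR
    · have hKrt : ((r, t) : ℝ × ℝ) ∈ K := Set.mem_prod.mpr ⟨⟨hr, hrR⟩, htmem⟩
      have hF : F (r, t) ≤ F (r₀, t₀) := hp₀max hKrt
      have hepos : 0 < Real.exp (-(mu*t)) := Real.exp_pos _
      have hFeval2 : F (r,t) = (max (pderivR u r t) (pderivR w r t)
          - ε * Real.exp (lam*t) * (1+r^2)) * Real.exp (-(mu*t)) := rfl
      have hmaxle : max (pderivR u r t) (pderivR w r t) - ε * Real.exp (lam*t) * (1+r^2) ≤ 0 := by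
        by_contra hcon
        push_neg at hcon
        have hpos := mul_pos hcon hepos
        rw [← hFeval2] at hpos
        linarith only [hF, hM, hpos]
      constructor
      · linarith only [hmaxle, le_max_left (pderivR u r t) (pderivR w r t)]
      · linarith only [hmaxle, le_max_right (pderivR u r t) (pderivR w r t)]
    · exact houter r t hrR htmem.1 htmem.2
  intro r hr t ht
  obtain ⟨ht0, htT⟩ := ht
  have hT₀1 : 0 < (t + T) / 2 := by
    have : (0:ℝ) ≤ t := ht0
    linarith
  have hT₀2 : (t + T) / 2 < T := by linarith
  have htT₀ : t ≤ (t + T) / 2 := by linarith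
  obtain ⟨lam, hlam⟩ := key ((t + T) / 2) hT₀1 hT₀2
  have hCpos : 0 < Real.exp (lam * t) * (1 + r^2) := by positivity
  have hbnd : ∀ a : ℝ, (∀ ε : ℝ, 0 < ε → a ≤ ε * (Real.exp (lam * t) * (1 + r^2))) → a ≤ 0 := by
    intro a ha
    by_contra hcon
    push_neg at hcon
    have hε : 0 < a / (2 * (Real.exp (lam * t) * (1 + r^2))) := by positivity
    have := ha _ hε
    rw [div_mul_eq_mul_div, mul_comm] at this
    have h2 : (Real.exp (lam * t) * (1 + r ^ 2)) * a / (2 * (Real.exp (lam * t) * (1 + r ^ 2)))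
        = a / 2 := by
      field_simp
    rw [h2] at this
    linarith
  constructor
  · refine hbnd _ fun ε hε => ?_
    have := (hlam ε hε r hr t ⟨ht0, htT₀⟩).1
    linarith [this, mul_assoc ε (Real.exp (lam * t)) (1 + r^2)]
  · refine hbnd _ fun ε hε => ?_
    have := (hlam ε hε r hr t ⟨ht0, htT₀⟩).2
    linarith [this, mul_assoc ε (Real.exp (lam * t)) (1 + r^2)]
end
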